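/- Let γ ∈ [0,2), d := 2(γ+1)/(2−γ), and let b be the γ-anti-tree over (X, m) with counting measure m ≡ 1 and intrinsic degree path metric ρ. Then there exists a constant C ≥ 1 such that for all x ∈ X, writing r_x := ρ(x,o): (i) C⁻¹ r^d ≤ #B_x(r) ≤ C r^d for all r ≥ max(1, r_x); and (ii) C⁻¹ r · r_x^{d−1} ≤ #B_x(r) ≤ C r · r_x^{d−1} for all r with 1 ≤ r ≤ r_x. -/

import Mathlib

open scoped BigOperators

/-- Vertex set of the anti-tree with sphere function `s`:
the `k`-th sphere has `s k` elements. -/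
def AntiTree (s : ℕ → ℕ) : Type := Σ k : ℕ, Fin (s k)

namespace AntiTree

/-- Standard edge weights of the anti-tree: consecutive spheres are completely connected,
and there are no other edges. -/
def wt (s : ℕ → ℕ) (x y : AntiTree s) : ℝ :=
  if x.1 + 1 = y.1 ∨ y.1 + 1 = x.1 then 1 else 0

/-- Weighted vertex degree with respect to the counting measure `m ≡ 1`. -/
noncomputable def Deg (s : ℕ → ℕ) (x : AntiTree s) : ℝ := ∑' y : AntiTree s, wt s x y

end AntiTree

/-- Intrinsic degree path (pseudo-)metric of a weighted graph `b` whose weighted degree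
function is `D`:  `ρ(x,y)` is the infimum over finite paths from `x` to `y` of
`∑_j min(1/D(x_j), 1/D(x_{j+1}))^{1/2}`. -/
noncomputable def pathMetric {X : Type*} (b : X → X → ℝ) (D : X → ℝ) (x y : X) : ℝ :=
  sInf { L : ℝ | ∃ (k : ℕ) (p : ℕ → X), p 0 = x ∧ p k = y ∧
    (∀ j < k, 0 < b (p j) (p (j + 1))) ∧
    L = ∑ j ∈ Finset.range k, Real.sqrt (min (1 / D (p j)) (1 / D (p (j + 1)))) }

/-- The intrinsic degree path metric of the anti-tree. -/
noncomputable def AntiTree.rho (s : ℕ → ℕ) : AntiTree s → AntiTree s → ℝ :=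
  pathMetric (AntiTree.wt s) (AntiTree.Deg s)

/-- Closed balls with respect to the intrinsic degree path metric. -/
noncomputable def AntiTree.ball (s : ℕ → ℕ) (x : AntiTree s) (r : ℝ) : Set (AntiTree s) :=
  {y | AntiTree.rho s x y ≤ r}

/-- The sphere function of the `γ`-anti-tree: `s (k-1) = ⌊k ^ γ⌋` for `k ≥ 1`,
i.e. `s k = ⌊(k+1) ^ γ⌋`. -/
noncomputable def gammaSphere (γ : ℝ) : ℕ → ℕ := fun k => ⌊((k : ℝ) + 1) ^ γ⌋₊

namespace GammaAux

/-- Degree計算 for general s. -/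
lemma deg_eq (s : ℕ → ℕ) (x : AntiTree s) :
    AntiTree.Deg s x = (s (x.1+1) : ℝ) + (if x.1 = 0 then 0 else (s (x.1-1) : ℝ)) := by
  classical
  set k := x.1 with hk
  have hN : ∀ y : AntiTree s, y ∉ ((Finset.range (k+2)).sigma
      (fun b => (Finset.univ : Finset (Fin (s b))))) → AntiTree.wt s x y = 0 := by
    intro y hy
    replace hy : ¬ (y.1 ∈ Finset.range (k+2) ∧ y.2 ∈ (Finset.univ : Finset (Fin (s y.1)))) :=
      fun h => hy (Finset.mem_sigma.2 h)
    have hy' : y.1 ∉ Finset.range (k+2) := fun hr => hy ⟨hr, Finset.mem_univ _⟩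
    have h : k + 2 ≤ y.1 := by
      by_contra h'
      exact hy' (Finset.mem_range.2 (by omega))
    · have h1 : ¬ (x.1 + 1 = y.1 ∨ y.1 + 1 = x.1) := by
        rintro (h2 | h2) <;> omega
      simp [AntiTree.wt, h1]
  have := tsum_eq_sum (L := SummationFilter.unconditional _) hN
  rw [AntiTree.Deg, this]
  erw [Finset.sum_sigma]
  have hterm : ∀ b ∈ Finset.range (k+2),
      (∑ i : Fin (s b), AntiTree.wt s x ⟨b, i⟩)
        = (if k + 1 = b then (s b : ℝ) else 0) + (if b + 1 = k then (s b : ℝ) else 0) := by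
    intro b _
    have : ∀ i : Fin (s b), AntiTree.wt s x ⟨b, i⟩
        = (if k + 1 = b then (1:ℝ) else 0) + (if b + 1 = k then (1:ℝ) else 0) := by
      intro i
      unfold AntiTree.wt
      rcases eq_or_ne (k+1) b with h1 | h1
      · have h2 : ¬ (b + 1 = k) := by omega
        simp [← hk, h1, h2]
      · rcases eq_or_ne (b+1) k with h2 | h2
        · simp [← hk, h1, h2]
        · simp [← hk, h1, h2]
    rw [Finset.sum_congr rfl (fun i _ => this i), Finset.sum_add_distrib]
    simp [Finset.card_univ]
  rw [Finset.sum_congr rfl hterm, Finset.sum_add_distrib]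
  congr 1
  · rw [Finset.sum_ite_eq (Finset.range (k+2)) (k+1) (fun b => (s b : ℝ))]
    simp
  · rcases Nat.eq_zero_or_pos k with h | h
    · simp [h]
    · have h0 : k ≠ 0 := by omega
      have : ∀ b ∈ Finset.range (k+2), (if b + 1 = k then (s b : ℝ) else 0)
          = if b = k - 1 then (s b : ℝ) else 0 := by
        intro b _
        have : (b + 1 = k) ↔ (b = k - 1) := by omega
        simp [this]
      rw [Finset.sum_congr rfl this, Finset.sum_ite_eq' (Finset.range (k+2)) (k-1)]
      have : k - 1 ∈ Finset.range (k+2) := by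
        rw [Finset.mem_range]; omega
      simp [this, h0]

/-- degree as a function of the level -/
noncomputable def DD (s : ℕ → ℕ) (k : ℕ) : ℝ :=
  (s (k+1) : ℝ) + (if k = 0 then 0 else (s (k-1) : ℝ))

/-- intrinsic weight of edges between levels `k` and `k+1` -/
noncomputable def ww (s : ℕ → ℕ) (k : ℕ) : ℝ := Real.sqrt (1 / DD s (k+1))

/-- intrinsic distance from the root to level `n` -/
noncomputable def WW (s : ℕ → ℕ) (n : ℕ) : ℝ := ∑ k ∈ Finset.range n, ww s k

section S
variable {s : ℕ → ℕ}

lemma deg_eq' (x : AntiTree s) : AntiTree.Deg s x = DD s x.1 := deg_eq s x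

lemma DD_pos (hs1 : ∀ k, 0 < s k) (k : ℕ) : 0 < DD s k := by
  unfold DD
  have h1 : (0:ℝ) < (s (k+1) : ℝ) := by exact_mod_cast hs1 (k+1)
  have h2 : (0:ℝ) ≤ (if k = 0 then 0 else (s (k-1) : ℝ)) := by positivity
  linarith

lemma DD_mono (hsm : Monotone s) : Monotone (DD s) := by
  apply monotone_nat_of_le_succ
  intro k
  unfold DD
  rcases Nat.eq_zero_or_pos k with h | h
  · subst h
    have h1 : (s 1 : ℝ) ≤ (s 2 : ℝ) := by exact_mod_cast hsm one_le_two
    have h2 : (0:ℝ) ≤ (s 0 : ℝ) := by positivity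
    rw [if_pos rfl, if_neg (Nat.one_ne_zero)]
    norm_num
    linarith
  · have hk : k ≠ 0 := by omega
    have hk1 : k + 1 ≠ 0 := by omega
    simp only [if_neg hk, if_neg hk1, Nat.add_sub_cancel]
    have h1 : (s (k+1) : ℝ) ≤ (s (k+2) : ℝ) := by exact_mod_cast hsm (by omega : k+1 ≤ k+2)
    have h2 : (s (k-1) : ℝ) ≤ (s k : ℝ) := by exact_mod_cast hsm (by omega : k-1 ≤ k)
    linarith

lemma ww_nonneg (k : ℕ) : 0 ≤ ww s k := Real.sqrt_nonneg _

lemma WW_succ (n : ℕ) : WW s (n+1) = WW s n + ww s n := Finset.sum_range_succ _ n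

lemma WW_nonneg (n : ℕ) : 0 ≤ WW s n :=
  Finset.sum_nonneg fun k _ => ww_nonneg k

lemma WW_mono : Monotone (WW s) := by
  apply monotone_nat_of_le_succ
  intro n
  rw [WW_succ]
  have := ww_nonneg (s := s) n
  linarith

lemma WW_zero : WW s 0 = 0 := rfl

lemma min_DD (hs1 : ∀ k, 0 < s k) (hsm : Monotone s) (k : ℕ) :
    min (1 / DD s k) (1 / DD s (k+1)) = 1 / DD s (k+1) :=
  min_eq_right (one_div_le_one_div_of_le (DD_pos hs1 k) (DD_mono hsm (by omega : k ≤ k+1)))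

lemma cost_up (hs1 : ∀ k, 0 < s k) (hsm : Monotone s) {x y : AntiTree s} (h : x.1 + 1 = y.1) :
    Real.sqrt (min (1 / AntiTree.Deg s x) (1 / AntiTree.Deg s y)) = ww s x.1 := by
  rw [deg_eq', deg_eq', ← h, min_DD hs1 hsm, ww]

lemma cost_down (hs1 : ∀ k, 0 < s k) (hsm : Monotone s) {x y : AntiTree s} (h : y.1 + 1 = x.1) :
    Real.sqrt (min (1 / AntiTree.Deg s x) (1 / AntiTree.Deg s y)) = ww s y.1 := by
  rw [deg_eq', deg_eq', ← h, min_comm, min_DD hs1 hsm, ww]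

lemma cost_abs (hs1 : ∀ k, 0 < s k) (hsm : Monotone s) {x y : AntiTree s}
    (h : x.1 + 1 = y.1 ∨ y.1 + 1 = x.1) :
    Real.sqrt (min (1 / AntiTree.Deg s x) (1 / AntiTree.Deg s y))
      = |WW s y.1 - WW s x.1| := by
  rcases h with h | h
  · rw [cost_up hs1 hsm h, ← h, WW_succ]
    rw [abs_of_nonneg (by have := ww_nonneg (s := s) x.1; linarith)]
    ring
  · rw [cost_down hs1 hsm h, ← h, WW_succ]
    rw [abs_of_nonpos (by have := ww_nonneg (s := s) y.1; linarith)]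
    ring

/-- the set of path lengths -/
def PS (s : ℕ → ℕ) (x y : AntiTree s) : Set ℝ :=
  { L : ℝ | ∃ (k : ℕ) (p : ℕ → AntiTree s), p 0 = x ∧ p k = y ∧
    (∀ j < k, 0 < AntiTree.wt s (p j) (p (j + 1))) ∧
    L = ∑ j ∈ Finset.range k, Real.sqrt (min (1 / AntiTree.Deg s (p j))
        (1 / AntiTree.Deg s (p (j + 1)))) }

lemma rho_eq_sInf (x y : AntiTree s) : AntiTree.rho s x y = sInf (PS s x y) := rfl

lemma PS_nonneg {x y : AntiTree s} {L : ℝ} (hL : L ∈ PS s x y) : 0 ≤ L := by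
  obtain ⟨k, p, -, -, -, rfl⟩ := hL
  exact Finset.sum_nonneg fun j _ => Real.sqrt_nonneg _

lemma PS_bddBelow (x y : AntiTree s) : BddBelow (PS s x y) :=
  ⟨0, fun L hL => PS_nonneg hL⟩

lemma wt_pos_iff {x y : AntiTree s} (h : 0 < AntiTree.wt s x y) :
    x.1 + 1 = y.1 ∨ y.1 + 1 = x.1 := by
  by_contra hc
  rw [AntiTree.wt, if_neg hc] at h
  exact lt_irrefl 0 h

lemma wt_pos {x y : AntiTree s} (h : x.1 + 1 = y.1 ∨ y.1 + 1 = x.1) :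
    0 < AntiTree.wt s x y := by
  rw [AntiTree.wt, if_pos h]; norm_num

/-- every path from `x` to `y` has length at least `|W|y|| - W|x||`. -/
lemma path_length_ge (hs1 : ∀ k, 0 < s k) (hsm : Monotone s) {x y : AntiTree s} {L : ℝ}
    (hL : L ∈ PS s x y) : |WW s y.1 - WW s x.1| ≤ L := by
  obtain ⟨k, p, h0, hk, hv, rfl⟩ := hL
  have hcost : ∀ j < k, Real.sqrt (min (1 / AntiTree.Deg s (p j)) (1 / AntiTree.Deg s (p (j+1))))
      = |WW s (p (j+1)).1 - WW s (p j).1| :=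
    fun j hj => cost_abs hs1 hsm (wt_pos_iff (hv j hj))
  calc |WW s y.1 - WW s x.1|
      = |∑ j ∈ Finset.range k, (WW s (p (j+1)).1 - WW s (p j).1)| := by
        rw [Finset.sum_range_sub (fun j => WW s (p j).1), h0, hk]
    _ ≤ ∑ j ∈ Finset.range k, |WW s (p (j+1)).1 - WW s (p j).1| :=
        Finset.abs_sum_le_sum_abs _ _
    _ = _ := (Finset.sum_congr rfl fun j hj => (hcost j (Finset.mem_range.1 hj)).symm)

/-- explicit monotone ascending path -/
lemma up_mem (hs1 : ∀ k, 0 < s k) (hsm : Monotone s) {x y : AntiTree s} (h : x.1 < y.1) :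
    (WW s y.1 - WW s x.1) ∈ PS s x y := by
  classical
  set a := x.1 with ha
  set b := y.1 with hb
  set k := b - a with hkdef
  refine ⟨k, fun j => if j = 0 then x else if a + j < b then ⟨a + j, ⟨0, hs1 _⟩⟩ else y, ?_, ?_, ?_, ?_⟩
  · simp
  · have hk0 : k ≠ 0 := by omega
    have : ¬ (a + k < b) := by omega
    simp [hk0, this]
  · intro j hj
    apply wt_pos
    left
    have l1 : (if j = 0 then x else if a + j < b then (⟨a + j, ⟨0, hs1 _⟩⟩ : AntiTree s) else y).1 = a + j := by
      rcases eq_or_ne j 0 with rfl | hj0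
      · simp [ha]
      · rcases lt_or_ge (a + j) b with h' | h'
        · simp [hj0, h']
        · have : a + j = b := by omega
          simp [hj0, not_lt.mpr h', ← hb, this]
    have l2 : (if j + 1 = 0 then x else if a + (j+1) < b then (⟨a + (j+1), ⟨0, hs1 _⟩⟩ : AntiTree s) else y).1 = a + (j+1) := by
      have hj0 : j + 1 ≠ 0 := by omega
      rcases lt_or_ge (a + (j+1)) b with h' | h'
      · simp [hj0, h']
      · have : a + (j+1) = b := by omega
        simp [hj0, not_lt.mpr h', ← hb, this]
    rw [l1, l2]
    omega
  · have l : ∀ j ≤ k, (if j = 0 then x else if a + j < b then (⟨a + j, ⟨0, hs1 _⟩⟩ : AntiTree s) else y).1 = a + j := by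
      intro j hj
      rcases eq_or_ne j 0 with rfl | hj0
      · simp [ha]
      · rcases lt_or_ge (a + j) b with h' | h'
        · simp [hj0, h']
        · have : a + j = b := by omega
          simp [hj0, not_lt.mpr h', ← hb, this]
    have hsum : ∀ j ∈ Finset.range k,
        Real.sqrt (min (1 / AntiTree.Deg s (if j = 0 then x else if a + j < b then (⟨a + j, ⟨0, hs1 _⟩⟩ : AntiTree s) else y))
          (1 / AntiTree.Deg s (if j + 1 = 0 then x else if a + (j+1) < b then (⟨a + (j+1), ⟨0, hs1 _⟩⟩ : AntiTree s) else y)))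
        = ww s (a + j) := by
      intro j hj
      rw [Finset.mem_range] at hj
      have hstep : (if j = 0 then x else if a + j < b then (⟨a + j, ⟨0, hs1 _⟩⟩ : AntiTree s) else y).1 + 1
          = (if j + 1 = 0 then x else if a + (j+1) < b then (⟨a + (j+1), ⟨0, hs1 _⟩⟩ : AntiTree s) else y).1 := by
        rw [l j (by omega), l (j+1) (by omega)]
        omega
      rw [cost_up hs1 hsm hstep, l j (by omega)]
    rw [Finset.sum_congr rfl hsum]
    have : ∑ j ∈ Finset.range k, ww s (a + j) = ∑ i ∈ Finset.Ico a b, ww s i := by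
      rw [Finset.sum_Ico_eq_sum_range]
    rw [this, Finset.sum_Ico_eq_sub _ (le_of_lt h)]
    rfl

/-- explicit monotone descending path -/
lemma down_mem (hs1 : ∀ k, 0 < s k) (hsm : Monotone s) {x y : AntiTree s} (h : y.1 < x.1) :
    (WW s x.1 - WW s y.1) ∈ PS s x y := by
  classical
  set a := x.1 with ha
  set b := y.1 with hb
  set k := a - b with hkdef
  refine ⟨k, fun j => if j = 0 then x else if b < a - j then ⟨a - j, ⟨0, hs1 _⟩⟩ else y, ?_, ?_, ?_, ?_⟩
  · simp
  · have hk0 : k ≠ 0 := by omega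
    have : ¬ (b < a - k) := by omega
    simp [hk0, this]
  · intro j hj
    apply wt_pos
    right
    have l : ∀ i ≤ k, (if i = 0 then x else if b < a - i then (⟨a - i, ⟨0, hs1 _⟩⟩ : AntiTree s) else y).1 = a - i := by
      intro i hi
      rcases eq_or_ne i 0 with rfl | hi0
      · simp [ha]
      · rcases lt_or_ge b (a - i) with h' | h'
        · simp [hi0, h']
        · have : a - i = b := by omega
          simp [hi0, not_lt.mpr h', ← hb, this]
    rw [l j (by omega), l (j+1) (by omega)]
    omega
  · have l : ∀ i ≤ k, (if i = 0 then x else if b < a - i then (⟨a - i, ⟨0, hs1 _⟩⟩ : AntiTree s) else y).1 = a - i := by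
      intro i hi
      rcases eq_or_ne i 0 with rfl | hi0
      · simp [ha]
      · rcases lt_or_ge b (a - i) with h' | h'
        · simp [hi0, h']
        · have : a - i = b := by omega
          simp [hi0, not_lt.mpr h', ← hb, this]
    have hsum : ∀ j ∈ Finset.range k,
        Real.sqrt (min (1 / AntiTree.Deg s (if j = 0 then x else if b < a - j then (⟨a - j, ⟨0, hs1 _⟩⟩ : AntiTree s) else y))
          (1 / AntiTree.Deg s (if j + 1 = 0 then x else if b < a - (j+1) then (⟨a - (j+1), ⟨0, hs1 _⟩⟩ : AntiTree s) else y)))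
        = ww s (a - (j+1)) := by
      intro j hj
      rw [Finset.mem_range] at hj
      have hstep : (if j + 1 = 0 then x else if b < a - (j+1) then (⟨a - (j+1), ⟨0, hs1 _⟩⟩ : AntiTree s) else y).1 + 1
          = (if j = 0 then x else if b < a - j then (⟨a - j, ⟨0, hs1 _⟩⟩ : AntiTree s) else y).1 := by
        rw [l j (by omega), l (j+1) (by omega)]
        omega
      rw [cost_down hs1 hsm hstep, l (j+1) (by omega)]
    rw [Finset.sum_congr rfl hsum]
    have h1 : ∑ j ∈ Finset.range k, ww s (a - (j+1)) = ∑ j ∈ Finset.range k, ww s (b + j) := by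
      rw [← Finset.sum_range_reflect (fun j => ww s (b + j)) k]
      apply Finset.sum_congr rfl
      intro j hj
      rw [Finset.mem_range] at hj
      congr 1
      omega
    rw [h1]
    have : ∑ j ∈ Finset.range k, ww s (b + j) = ∑ i ∈ Finset.Ico b a, ww s i := by
      rw [Finset.sum_Ico_eq_sum_range]
    rw [this, Finset.sum_Ico_eq_sub _ (le_of_lt h)]
    rfl

/-- a same-level path through the upper sphere -/
lemma same_mem (hs1 : ∀ k, 0 < s k) (hsm : Monotone s) {x y : AntiTree s} (h : x.1 = y.1) :
    (2 * ww s x.1) ∈ PS s x y := by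
  classical
  set u : AntiTree s := ⟨x.1 + 1, ⟨0, hs1 _⟩⟩ with hu
  set p : ℕ → AntiTree s := fun j => if j = 0 then x else if j = 1 then u else y with hp
  have p0 : p 0 = x := by simp [hp]
  have p1 : p 1 = u := by simp [hp]
  have p2 : p 2 = y := by simp [hp]
  have hux : u.1 = x.1 + 1 := rfl
  refine ⟨2, p, p0, p2, ?_, ?_⟩
  · intro j hj
    have hj2 : j = 0 ∨ j = 1 := by omega
    rcases hj2 with rfl | rfl
    · rw [show (0:ℕ)+1 = 1 from rfl, p0, p1]
      exact wt_pos (Or.inl hux.symm)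
    · rw [show (1:ℕ)+1 = 2 from rfl, p1, p2]
      exact wt_pos (Or.inr (by rw [hux, ← h]))
  · rw [Finset.sum_range_succ, Finset.sum_range_one]
    rw [show (0:ℕ)+1 = 1 from rfl, show (1:ℕ)+1 = 2 from rfl, p0, p1, p2]
    rw [cost_up hs1 hsm (show x.1 + 1 = u.1 from hux.symm),
        cost_down hs1 hsm (show y.1 + 1 = u.1 by rw [hux, ← h]), ← h]
    ring

lemma refl_mem (x : AntiTree s) : (0:ℝ) ∈ PS s x x :=
  ⟨0, fun _ => x, rfl, rfl, by omega, by simp⟩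

lemma PS_nonempty (hs1 : ∀ k, 0 < s k) (hsm : Monotone s) (x y : AntiTree s) :
    (PS s x y).Nonempty := by
  rcases lt_trichotomy x.1 y.1 with h | h | h
  · exact ⟨_, up_mem hs1 hsm h⟩
  · exact ⟨_, same_mem hs1 hsm h⟩
  · exact ⟨_, down_mem hs1 hsm h⟩

lemma rho_ge (hs1 : ∀ k, 0 < s k) (hsm : Monotone s) (x y : AntiTree s) :
    |WW s y.1 - WW s x.1| ≤ AntiTree.rho s x y :=
  le_csInf (PS_nonempty hs1 hsm x y) fun _ hL => path_length_ge hs1 hsm hL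

lemma rho_nonneg (hs1 : ∀ k, 0 < s k) (hsm : Monotone s) (x y : AntiTree s) :
    0 ≤ AntiTree.rho s x y :=
  le_csInf (PS_nonempty hs1 hsm x y) fun _ hL => PS_nonneg hL

lemma rho_self (hs1 : ∀ k, 0 < s k) (hsm : Monotone s) (x : AntiTree s) :
    AntiTree.rho s x x = 0 :=
  le_antisymm (csInf_le (PS_bddBelow x x) (refl_mem x)) (rho_nonneg hs1 hsm x x)

lemma rho_eq_of_ne (hs1 : ∀ k, 0 < s k) (hsm : Monotone s) {x y : AntiTree s} (h : x.1 ≠ y.1) :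
    AntiTree.rho s x y = |WW s y.1 - WW s x.1| := by
  apply le_antisymm _ (rho_ge hs1 hsm x y)
  rcases lt_or_gt_of_ne h with h' | h'
  · have := csInf_le (PS_bddBelow x y) (up_mem hs1 hsm h')
    rw [abs_of_nonneg (by have := WW_mono (s := s) (le_of_lt h'); linarith)]
    exact this
  · have := csInf_le (PS_bddBelow x y) (down_mem hs1 hsm h')
    rw [abs_of_nonpos (by have := WW_mono (s := s) (le_of_lt h'); linarith)]
    rw [neg_sub]
    exact this

lemma rho_le_same (hs1 : ∀ k, 0 < s k) (hsm : Monotone s) {x y : AntiTree s} (h : x.1 = y.1) :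
    AntiTree.rho s x y ≤ 2 * ww s x.1 :=
  csInf_le (PS_bddBelow x y) (same_mem hs1 hsm h)

end S

section Count
variable {s : ℕ → ℕ}

/-- the finset of vertices with levels in `F` -/
def levelFinset (s : ℕ → ℕ) (F : Finset ℕ) : Finset (AntiTree s) :=
  F.sigma (fun b => (Finset.univ : Finset (Fin (s b))))

lemma levels_eq_coe (F : Finset ℕ) :
    {y : AntiTree s | y.1 ∈ F} = ↑(levelFinset s F) := by
  ext y
  constructor
  · intro hy
    exact Finset.mem_coe.2 (Finset.mem_sigma.2 ⟨hy, Finset.mem_univ _⟩)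
  · intro hy
    exact (Finset.mem_sigma.1 (Finset.mem_coe.1 hy)).1

lemma levels_finite (F : Finset ℕ) : ({y : AntiTree s | y.1 ∈ F}).Finite := by
  rw [levels_eq_coe]
  exact (levelFinset s F).finite_toSet

lemma ncard_levels (F : Finset ℕ) :
    ({y : AntiTree s | y.1 ∈ F}).ncard = ∑ b ∈ F, s b := by
  rw [levels_eq_coe, Set.ncard_coe_finset, levelFinset]
  exact (Finset.card_sigma _ _).trans (by simp)

lemma ncard_le_of_subset_levels {A : Set (AntiTree s)} {F : Finset ℕ}
    (h : ∀ y : AntiTree s, y ∈ A → y.1 ∈ F) : A.ncard ≤ ∑ b ∈ F, s b := by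
  rw [← ncard_levels (s := s) F]
  exact Set.ncard_le_ncard h (levels_finite F)

lemma le_ncard_of_levels_subset {A : Set (AntiTree s)} {F : Finset ℕ} (hA : A.Finite)
    (h : ∀ y : AntiTree s, y.1 ∈ F → y ∈ A) : ∑ b ∈ F, s b ≤ A.ncard := by
  rw [← ncard_levels (s := s) F]
  exact Set.ncard_le_ncard h hA

end Count

section Gamma

variable {γ : ℝ}

lemma rpow_anti {x y e : ℝ} (hx : 0 < x) (hxy : x ≤ y) (he : 0 ≤ e) :
    y ^ (-e) ≤ x ^ (-e) := by
  rw [Real.rpow_neg (le_of_lt hx), Real.rpow_neg (by linarith)]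
  exact inv_anti₀ (Real.rpow_pos_of_pos hx e) (Real.rpow_le_rpow (le_of_lt hx) hxy he)

lemma sqrt_rpow_inv {x t : ℝ} (hx : 0 ≤ x) : Real.sqrt ((x ^ t)⁻¹) = x ^ (-(t/2)) := by
  rw [← Real.rpow_neg hx, Real.sqrt_eq_rpow, ← Real.rpow_mul hx]
  ring_nf

lemma s_pos (hγ0 : 0 ≤ γ) (k : ℕ) : 0 < gammaSphere γ k := by
  have h1 : (1:ℝ) ≤ ((k:ℝ) + 1) ^ γ := by
    have hk : (1:ℝ) ≤ (k:ℝ) + 1 := by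
      have := Nat.cast_nonneg (α := ℝ) k
      linarith
    have h1' : (1:ℝ) ^ γ ≤ ((k:ℝ) + 1) ^ γ := Real.rpow_le_rpow (by norm_num) hk hγ0
    rwa [Real.one_rpow] at h1' 
  exact Nat.le_floor (by exact_mod_cast h1 : ((1:ℕ):ℝ) ≤ ((k:ℝ) + 1) ^ γ)

lemma s_mono (hγ0 : 0 ≤ γ) : Monotone (gammaSphere γ) := by
  intro k l hkl
  apply Nat.floor_mono
  have h : ((k:ℝ) + 1) ≤ (l:ℝ) + 1 := by
    have : (k:ℝ) ≤ (l:ℝ) := by exact_mod_cast hkl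
    linarith
  exact Real.rpow_le_rpow (by positivity) h hγ0

lemma s_le (k : ℕ) : (gammaSphere γ k : ℝ) ≤ ((k:ℝ) + 1) ^ γ :=
  Nat.floor_le (by positivity)

lemma s_ge (hγ0 : 0 ≤ γ) (k : ℕ) : ((k:ℝ) + 1) ^ γ ≤ 2 * (gammaSphere γ k : ℝ) := by
  have h2 := Nat.lt_floor_add_one (((k:ℝ) + 1) ^ γ)
  have h3 : (1:ℕ) ≤ gammaSphere γ k := s_pos hγ0 k
  unfold gammaSphere at h3 ⊢
  have h4 : (1:ℝ) ≤ (⌊((k:ℝ) + 1) ^ γ⌋₊ : ℝ) := by exact_mod_cast h3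
  linarith

lemma cast_succ (k : ℕ) : (((k+1):ℕ):ℝ) + 1 = (k:ℝ) + 2 := by push_cast; ring

/-- lower bound for the level degree -/
lemma DD_ge (hγ0 : 0 ≤ γ) (k : ℕ) : ((k:ℝ) + 1) ^ γ / 2 ≤ DD (gammaSphere γ) k := by
  have h1 : ((k:ℝ) + 2) ^ γ ≤ 2 * (gammaSphere γ (k+1) : ℝ) := by
    have h0 := s_ge hγ0 (k+1)
    rwa [cast_succ] at h0
  have h2 : ((k:ℝ) + 1) ^ γ ≤ ((k:ℝ) + 2) ^ γ :=
    Real.rpow_le_rpow (by positivity) (by linarith) hγ0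
  have h3 : (0:ℝ) ≤ (if k = 0 then 0 else (gammaSphere γ (k-1) : ℝ)) := by positivity
  unfold DD
  linarith

/-- upper bound for the level degree -/
lemma DD_le (hγ0 : 0 ≤ γ) (hγ2 : γ < 2) (k : ℕ) :
    DD (gammaSphere γ) k ≤ 8 * ((k:ℝ) + 1) ^ γ := by
  have h2γ : (2:ℝ) ^ γ ≤ 4 := by
    have := Real.rpow_le_rpow_of_exponent_le (one_le_two (α := ℝ)) (le_of_lt hγ2)
    have h4 : (2:ℝ) ^ (2:ℝ) = 4 := by
      rw [show ((2:ℝ):ℝ) = ((2:ℕ):ℝ) by norm_num, Real.rpow_natCast]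
      norm_num
    linarith
  rcases Nat.eq_zero_or_pos k with rfl | hk
  · unfold DD
    rw [if_pos rfl]
    have h1 : (gammaSphere γ 1 : ℝ) ≤ (2:ℝ) ^ γ := by
      have := s_le (γ := γ) 1
      norm_num at this
      exact this
    have h5 : ((0:ℕ):ℝ) + 1 = 1 := by norm_num
    rw [h5, Real.one_rpow]
    linarith
  · have hk0 : k ≠ 0 := by omega
    unfold DD
    rw [if_neg hk0]
    have h1 : (gammaSphere γ (k+1) : ℝ) ≤ ((k:ℝ) + 2) ^ γ := by
      have := s_le (γ := γ) (k+1)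
      rwa [cast_succ] at this
    have h2 : (gammaSphere γ (k-1) : ℝ) ≤ ((k:ℝ) + 2) ^ γ := by
      have h3 := s_le (γ := γ) (k-1)
      have h4 : (((k-1:ℕ)):ℝ) + 1 ≤ (k:ℝ) + 2 := by
        have : ((k-1:ℕ):ℝ) ≤ (k:ℝ) := by exact_mod_cast Nat.sub_le k 1
        linarith
      exact le_trans h3 (Real.rpow_le_rpow (by positivity) h4 hγ0)
    have h5 : ((k:ℝ) + 2) ^ γ ≤ 2 ^ γ * ((k:ℝ) + 1) ^ γ := by
      rw [← Real.mul_rpow (by norm_num) (by positivity)]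
      apply Real.rpow_le_rpow (by positivity) _ hγ0
      have : (1:ℝ) ≤ (k:ℝ) := by exact_mod_cast hk
      linarith
    have h6 : (0:ℝ) ≤ ((k:ℝ) + 1) ^ γ := by positivity
    nlinarith

/-- lower bound for edge weights -/
lemma ww_ge (hγ0 : 0 ≤ γ) (hγ2 : γ < 2) (k : ℕ) :
    Real.sqrt (1/8) * ((k:ℝ) + 2) ^ (-(γ/2)) ≤ ww (gammaSphere γ) k := by
  have hDpos : 0 < DD (gammaSphere γ) (k+1) := DD_pos (s_pos hγ0) (k+1)
  have hDle : DD (gammaSphere γ) (k+1) ≤ 8 * ((k:ℝ) + 2) ^ γ := by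
    have := DD_le hγ0 hγ2 (k+1)
    rwa [cast_succ] at this
  have h8 : (0:ℝ) < 8 * ((k:ℝ) + 2) ^ γ := by positivity
  have h1 : (8 * ((k:ℝ) + 2) ^ γ)⁻¹ ≤ 1 / DD (gammaSphere γ) (k+1) := by
    rw [one_div]
    exact inv_anti₀ hDpos hDle
  have h2 : Real.sqrt ((8 * ((k:ℝ) + 2) ^ γ)⁻¹) ≤ ww (gammaSphere γ) k :=
    Real.sqrt_le_sqrt h1
  have h3 : Real.sqrt ((8 * ((k:ℝ) + 2) ^ γ)⁻¹) = Real.sqrt (1/8) * ((k:ℝ) + 2) ^ (-(γ/2)) := by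
    rw [mul_inv, ← sqrt_rpow_inv (by positivity : (0:ℝ) ≤ (k:ℝ) + 2)]
    rw [Real.sqrt_mul (by norm_num)]
    norm_num
  linarith

/-- upper bound for edge weights -/
lemma ww_le (hγ0 : 0 ≤ γ) (k : ℕ) :
    ww (gammaSphere γ) k ≤ Real.sqrt 2 * ((k:ℝ) + 2) ^ (-(γ/2)) := by
  have hDge : ((k:ℝ) + 2) ^ γ / 2 ≤ DD (gammaSphere γ) (k+1) := by
    have := DD_ge hγ0 (k+1)
    rwa [cast_succ] at this
  have hpos : (0:ℝ) < ((k:ℝ) + 2) ^ γ / 2 := by positivity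
  have h1 : 1 / DD (gammaSphere γ) (k+1) ≤ 2 * (((k:ℝ) + 2) ^ γ)⁻¹ := by
    rw [one_div]
    have := inv_anti₀ hpos hDge
    rw [inv_div] at this
    calc (DD (gammaSphere γ) (k+1))⁻¹ ≤ 2 / ((k:ℝ) + 2) ^ γ := this
      _ = 2 * (((k:ℝ) + 2) ^ γ)⁻¹ := by ring
  have h2 : ww (gammaSphere γ) k ≤ Real.sqrt (2 * (((k:ℝ) + 2) ^ γ)⁻¹) :=
    Real.sqrt_le_sqrt h1
  have h3 : Real.sqrt (2 * (((k:ℝ) + 2) ^ γ)⁻¹) = Real.sqrt 2 * ((k:ℝ) + 2) ^ (-(γ/2)) := by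
    rw [Real.sqrt_mul (by norm_num), sqrt_rpow_inv (by positivity : (0:ℝ) ≤ (k:ℝ) + 2)]
  linarith

/-- distance between levels, lower bound -/
lemma WW_diff_ge (hγ0 : 0 ≤ γ) (hγ2 : γ < 2) {a b : ℕ} (hab : a ≤ b) :
    Real.sqrt (1/8) * ((b:ℕ) - (a:ℕ) : ℕ) * ((b:ℝ) + 1) ^ (-(γ/2))
      ≤ WW (gammaSphere γ) b - WW (gammaSphere γ) a := by
  rw [WW, WW, ← Finset.sum_Ico_eq_sub _ hab]
  have hterm : ∀ k ∈ Finset.Ico a b,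
      Real.sqrt (1/8) * ((b:ℝ) + 1) ^ (-(γ/2)) ≤ ww (gammaSphere γ) k := by
    intro k hk
    rw [Finset.mem_Ico] at hk
    have h1 := ww_ge hγ0 hγ2 k
    have h2 : ((b:ℝ) + 1) ^ (-(γ/2)) ≤ ((k:ℝ) + 2) ^ (-(γ/2)) := by
      apply rpow_anti (by positivity) _ (by linarith)
      have : (k:ℝ) + 1 ≤ (b:ℝ) := by exact_mod_cast hk.2
      linarith
    have h3 : (0:ℝ) ≤ Real.sqrt (1/8) := Real.sqrt_nonneg _
    nlinarith
  calc Real.sqrt (1/8) * ((b:ℕ) - (a:ℕ) : ℕ) * ((b:ℝ) + 1) ^ (-(γ/2))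
      = ∑ _k ∈ Finset.Ico a b, Real.sqrt (1/8) * ((b:ℝ) + 1) ^ (-(γ/2)) := by
        rw [Finset.sum_const, Nat.card_Ico, nsmul_eq_mul]
        ring
    _ ≤ ∑ k ∈ Finset.Ico a b, ww (gammaSphere γ) k := Finset.sum_le_sum hterm

/-- distance between levels, upper bound -/
lemma WW_diff_le (hγ0 : 0 ≤ γ) {a b : ℕ} (hab : a ≤ b) :
    WW (gammaSphere γ) b - WW (gammaSphere γ) a
      ≤ Real.sqrt 2 * ((b:ℕ) - (a:ℕ) : ℕ) * ((a:ℝ) + 1) ^ (-(γ/2)) := by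
  rw [WW, WW, ← Finset.sum_Ico_eq_sub _ hab]
  have hterm : ∀ k ∈ Finset.Ico a b,
      ww (gammaSphere γ) k ≤ Real.sqrt 2 * ((a:ℝ) + 1) ^ (-(γ/2)) := by
    intro k hk
    rw [Finset.mem_Ico] at hk
    have h1 := ww_le hγ0 k
    have h2 : ((k:ℝ) + 2) ^ (-(γ/2)) ≤ ((a:ℝ) + 1) ^ (-(γ/2)) := by
      apply rpow_anti (by positivity) _ (by linarith [hγ0])
      have : (a:ℝ) ≤ (k:ℝ) := by exact_mod_cast hk.1
      linarith
    have h3 : (0:ℝ) ≤ Real.sqrt 2 := Real.sqrt_nonneg _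
    nlinarith
  calc ∑ k ∈ Finset.Ico a b, ww (gammaSphere γ) k
      ≤ ∑ _k ∈ Finset.Ico a b, Real.sqrt 2 * ((a:ℝ) + 1) ^ (-(γ/2)) :=
        Finset.sum_le_sum hterm
    _ = Real.sqrt 2 * ((b:ℕ) - (a:ℕ) : ℕ) * ((a:ℝ) + 1) ^ (-(γ/2)) := by
        rw [Finset.sum_const, Nat.card_Ico, nsmul_eq_mul]
        ring

/-- Bernoulli-type telescoping bound -/
lemma sum_rpow_le (hγ0 : 0 ≤ γ) (hγ2 : γ < 2) (n : ℕ) :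
    ∑ k ∈ Finset.range n, ((k:ℝ) + 1) ^ (-(γ/2)) ≤ (n:ℝ) ^ (1 - γ/2) / (1 - γ/2) := by
  set p : ℝ := 1 - γ/2 with hp
  have hp0 : 0 < p := by rw [hp]; linarith
  have hp1 : p ≤ 1 := by rw [hp]; linarith
  have hb : ∀ k : ℕ, p * ((k:ℝ) + 1) ^ (-(γ/2)) ≤ ((k:ℝ) + 1) ^ p - (k:ℝ) ^ p := by
    intro k
    have hk1 : (0:ℝ) < (k:ℝ) + 1 := by positivity
    have hs : (-1:ℝ) ≤ -(1/((k:ℝ)+1)) := by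
      rw [neg_le_neg_iff]
      rw [div_le_one hk1]
      have : (0:ℝ) ≤ (k:ℝ) := Nat.cast_nonneg k
      linarith
    have hber := rpow_one_add_le_one_add_mul_self hs (le_of_lt hp0) hp1
    have h1 : (1 + -(1/((k:ℝ)+1))) = (k:ℝ)/((k:ℝ)+1) := by field_simp; ring
    rw [h1] at hber
    have h2 : ((k:ℝ)/((k:ℝ)+1)) ^ p * ((k:ℝ)+1) ^ p = (k:ℝ) ^ p := by
      rw [← Real.mul_rpow (by positivity) (by positivity)]
      congr 1
      field_simp
    have h3 : (1 + p * -(1/((k:ℝ)+1))) * ((k:ℝ)+1) ^ p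
        = ((k:ℝ)+1) ^ p - p * ((k:ℝ)+1) ^ (p - 1) := by
      have halg : ∀ X : ℝ, (1 + p * -(1/((k:ℝ)+1))) * X = X - p * (X/((k:ℝ)+1)) := by
        intro X
        ring
      have hsplit : ((k:ℝ)+1) ^ (p-1) = ((k:ℝ)+1) ^ p / ((k:ℝ)+1) := by
        rw [Real.rpow_sub hk1 p 1, Real.rpow_one]
      rw [hsplit]
      exact halg _
    have h4 : ((k:ℝ)/((k:ℝ)+1)) ^ p * ((k:ℝ)+1) ^ p
        ≤ (1 + p * -(1/((k:ℝ)+1))) * ((k:ℝ)+1) ^ p := by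
      apply mul_le_mul_of_nonneg_right hber (by positivity)
    rw [h2, h3] at h4
    have h5 : p - 1 = -(γ/2) := by rw [hp]; ring
    rw [h5] at h4
    linarith
  have hsum : p * ∑ k ∈ Finset.range n, ((k:ℝ) + 1) ^ (-(γ/2))
      ≤ ∑ k ∈ Finset.range n, (((k:ℝ) + 1) ^ p - (k:ℝ) ^ p) := by
    rw [Finset.mul_sum]
    exact Finset.sum_le_sum fun k _ => hb k
  have htel : ∑ k ∈ Finset.range n, (((k:ℝ) + 1) ^ p - (k:ℝ) ^ p) = (n:ℝ) ^ p := by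
    have := Finset.sum_range_sub (fun k => ((k:ℝ)) ^ p) n
    simp only [Nat.cast_add, Nat.cast_one] at this
    rw [this]
    rw [Nat.cast_zero, Real.zero_rpow (by linarith : p ≠ 0), sub_zero]
  rw [htel] at hsum
  rw [le_div_iff₀ hp0]
  nlinarith [hsum]

/-- upper bound for the distance from the root -/
lemma WW_le_rpow (hγ0 : 0 ≤ γ) (hγ2 : γ < 2) (n : ℕ) :
    WW (gammaSphere γ) n ≤ (Real.sqrt 2 / (1 - γ/2)) * (n:ℝ) ^ (1 - γ/2) := by
  have h1 : WW (gammaSphere γ) n ≤ ∑ k ∈ Finset.range n, Real.sqrt 2 * ((k:ℝ) + 1) ^ (-(γ/2)) := by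
    apply Finset.sum_le_sum
    intro k _
    have ha := ww_le hγ0 k
    have hb : ((k:ℝ) + 2) ^ (-(γ/2)) ≤ ((k:ℝ) + 1) ^ (-(γ/2)) :=
      rpow_anti (by positivity) (by linarith) (by linarith)
    have h3 : (0:ℝ) ≤ Real.sqrt 2 := Real.sqrt_nonneg _
    nlinarith
  have h2 : ∑ k ∈ Finset.range n, Real.sqrt 2 * ((k:ℝ) + 1) ^ (-(γ/2))
      = Real.sqrt 2 * ∑ k ∈ Finset.range n, ((k:ℝ) + 1) ^ (-(γ/2)) := by
    rw [Finset.mul_sum]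
  have h3 := sum_rpow_le hγ0 hγ2 n
  have h4 : (0:ℝ) ≤ Real.sqrt 2 := Real.sqrt_nonneg _
  have h5 : Real.sqrt 2 * ∑ k ∈ Finset.range n, ((k:ℝ) + 1) ^ (-(γ/2))
      ≤ Real.sqrt 2 * ((n:ℝ) ^ (1 - γ/2) / (1 - γ/2)) := by
    apply mul_le_mul_of_nonneg_left h3 h4
  calc WW (gammaSphere γ) n ≤ _ := h1
    _ = _ := h2
    _ ≤ _ := h5
    _ = (Real.sqrt 2 / (1 - γ/2)) * (n:ℝ) ^ (1 - γ/2) := by ring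

/-- lower bound for the distance from the root -/
lemma WW_ge_rpow (hγ0 : 0 ≤ γ) (hγ2 : γ < 2) (n : ℕ) (hn : 1 ≤ n) :
    (Real.sqrt (1/8) / 2) * (n:ℝ) ^ (1 - γ/2) ≤ WW (gammaSphere γ) n := by
  have h0 := WW_diff_ge hγ0 hγ2 (Nat.zero_le n)
  rw [WW_zero, sub_zero, Nat.sub_zero] at h0
  have hn1 : (1:ℝ) ≤ (n:ℝ) := by exact_mod_cast hn
  have h1 : ((n:ℝ)) ^ (-(γ/2)) / 2 ≤ ((n:ℝ) + 1) ^ (-(γ/2)) := by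
    have ha : ((n:ℝ) + 1) ≤ 2 * (n:ℝ) := by linarith
    have hb : ((2:ℝ) * (n:ℝ)) ^ (-(γ/2)) ≤ ((n:ℝ) + 1) ^ (-(γ/2)) :=
      rpow_anti (by positivity) ha (by linarith)
    have hc : ((2:ℝ) * (n:ℝ)) ^ (-(γ/2)) = 2 ^ (-(γ/2)) * (n:ℝ) ^ (-(γ/2)) :=
      Real.mul_rpow (by norm_num) (by positivity)
    have hd : (1:ℝ)/2 ≤ (2:ℝ) ^ (-(γ/2)) := by
      have he : (2:ℝ) ^ (-1:ℝ) ≤ (2:ℝ) ^ (-(γ/2)) :=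
        Real.rpow_le_rpow_of_exponent_le one_le_two (by linarith)
      have hf : (2:ℝ) ^ (-1:ℝ) = 1/2 := by
        rw [Real.rpow_neg_one]
        norm_num
      linarith
    have hg : (0:ℝ) ≤ (n:ℝ) ^ (-(γ/2)) := Real.rpow_nonneg (by positivity) _
    nlinarith
  have h2 : (n:ℝ) * ((n:ℝ) ^ (-(γ/2)) / 2) ≤ (n:ℝ) * ((n:ℝ) + 1) ^ (-(γ/2)) :=
    mul_le_mul_of_nonneg_left h1 (by positivity)
  have h3 : (n:ℝ) ^ (1 - γ/2) = (n:ℝ) * (n:ℝ) ^ (-(γ/2)) := by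
    rw [show (1 - γ/2 : ℝ) = 1 + (-(γ/2)) by ring, Real.rpow_add (by linarith : (0:ℝ) < (n:ℝ)),
      Real.rpow_one]
  have h4 : (0:ℝ) ≤ Real.sqrt (1/8) := Real.sqrt_nonneg _
  have h5 : Real.sqrt (1/8) * (n:ℝ) * ((n:ℝ) + 1) ^ (-(γ/2)) ≤ WW (gammaSphere γ) n := h0
  nlinarith

/-- upper bound for sphere volume sums -/
lemma sum_s_le (hγ0 : 0 ≤ γ) (n : ℕ) :
    ∑ b ∈ Finset.range (n+1), (gammaSphere γ b : ℝ) ≤ ((n:ℝ) + 1) ^ (γ + 1) := by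
  have h1 : ∀ b ∈ Finset.range (n+1), (gammaSphere γ b : ℝ) ≤ ((n:ℝ) + 1) ^ γ := by
    intro b hb
    rw [Finset.mem_range] at hb
    refine le_trans (s_le b) (Real.rpow_le_rpow (by positivity) ?_ hγ0)
    have : (b:ℝ) ≤ (n:ℝ) := by exact_mod_cast Nat.lt_succ_iff.1 hb
    linarith
  calc ∑ b ∈ Finset.range (n+1), (gammaSphere γ b : ℝ)
      ≤ ∑ _b ∈ Finset.range (n+1), ((n:ℝ) + 1) ^ γ := Finset.sum_le_sum h1
    _ = ((n:ℝ) + 1) * ((n:ℝ) + 1) ^ γ := by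
        rw [Finset.sum_const, Finset.card_range, nsmul_eq_mul]
        push_cast
        ring
    _ = ((n:ℝ) + 1) ^ (γ + 1) := by
        rw [Real.rpow_add (by positivity), Real.rpow_one]
        ring

/-- lower bound for sphere volume sums -/
lemma sum_s_ge (hγ0 : 0 ≤ γ) (hγ2 : γ < 2) (n : ℕ) :
    (n:ℝ) ^ (γ + 1) / 16 ≤ ∑ b ∈ Finset.range (n+1), (gammaSphere γ b : ℝ) := by
  have hsub : Finset.Icc (n/2) n ⊆ Finset.range (n+1) := by
    intro b hb
    rw [Finset.mem_Icc] at hb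
    rw [Finset.mem_range]
    omega
  have hterm : ∀ b ∈ Finset.Icc (n/2) n, ((n:ℝ)/2) ^ γ / 2 ≤ (gammaSphere γ b : ℝ) := by
    intro b hb
    rw [Finset.mem_Icc] at hb
    have h1 : (n:ℝ)/2 ≤ (b:ℝ) + 1 := by
      have : n ≤ 2 * (b + 1) := by omega
      have h2 : (n:ℝ) ≤ 2 * ((b:ℝ) + 1) := by exact_mod_cast this
      linarith
    have h3 : ((n:ℝ)/2) ^ γ ≤ ((b:ℝ) + 1) ^ γ :=
      Real.rpow_le_rpow (by positivity) h1 hγ0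
    have h4 := s_ge hγ0 b
    linarith
  have hcard : (n:ℝ)/2 ≤ ((Finset.Icc (n/2) n).card : ℝ) := by
    rw [Nat.card_Icc]
    have : n ≤ 2 * (n + 1 - n/2) := by omega
    have h2 : (n:ℝ) ≤ 2 * ((n + 1 - n/2 : ℕ) : ℝ) := by exact_mod_cast this
    linarith
  have hmain : ((Finset.Icc (n/2) n).card : ℝ) * (((n:ℝ)/2) ^ γ / 2)
      ≤ ∑ b ∈ Finset.Icc (n/2) n, (gammaSphere γ b : ℝ) := by
    calc ((Finset.Icc (n/2) n).card : ℝ) * (((n:ℝ)/2) ^ γ / 2)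
        = ∑ _b ∈ Finset.Icc (n/2) n, (((n:ℝ)/2) ^ γ / 2) := by
          rw [Finset.sum_const, nsmul_eq_mul]
      _ ≤ _ := Finset.sum_le_sum hterm
  have hpos : ∀ b ∈ Finset.range (n+1), (0:ℝ) ≤ (gammaSphere γ b : ℝ) := by
    intro b _
    positivity
  have hsum : ∑ b ∈ Finset.Icc (n/2) n, (gammaSphere γ b : ℝ)
      ≤ ∑ b ∈ Finset.range (n+1), (gammaSphere γ b : ℝ) :=
    Finset.sum_le_sum_of_subset_of_nonneg hsub (fun b hb _ => hpos b hb)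
  have hx : (0:ℝ) ≤ ((n:ℝ)/2) ^ γ / 2 := by positivity
  have hq : (n:ℝ)/2 * (((n:ℝ)/2) ^ γ / 2) ≤ ((Finset.Icc (n/2) n).card : ℝ) * (((n:ℝ)/2) ^ γ / 2) :=
    mul_le_mul_of_nonneg_right hcard hx
  have hkey : (n:ℝ) ^ (γ + 1) / 16 ≤ (n:ℝ)/2 * (((n:ℝ)/2) ^ γ / 2) := by
    have e1 : ((n:ℝ)/2) ^ γ = (n:ℝ) ^ γ / 2 ^ γ := Real.div_rpow (by positivity) (by norm_num) γ
    have e2 : (n:ℝ) ^ (γ + 1) = (n:ℝ) ^ γ * (n:ℝ) := by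
      rcases Nat.eq_zero_or_pos n with rfl | hn
      · rw [Nat.cast_zero, Real.zero_rpow (by linarith : γ + 1 ≠ 0)]
        ring
      · rw [Real.rpow_add (by exact_mod_cast hn : (0:ℝ) < (n:ℝ)), Real.rpow_one]
    have e3 : (2:ℝ) ^ γ ≤ 4 := by
      have := Real.rpow_le_rpow_of_exponent_le (one_le_two (α := ℝ)) (le_of_lt hγ2)
      have h4 : (2:ℝ) ^ (2:ℝ) = 4 := by
        rw [show ((2:ℝ):ℝ) = ((2:ℕ):ℝ) by norm_num, Real.rpow_natCast]
        norm_num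
      linarith
    have e4 : (0:ℝ) < (2:ℝ) ^ γ := by positivity
    have e5 : (0:ℝ) ≤ (n:ℝ) ^ γ := Real.rpow_nonneg (by positivity) γ
    have e6 : (0:ℝ) ≤ (n:ℝ) := by positivity
    rw [e1, e2]
    have h9 : (1:ℝ)/4 ≤ 1/(2:ℝ)^γ := by
      rw [div_le_div_iff₀ (by norm_num) e4]
      linarith
    have h10 : (n:ℝ)^γ/4 ≤ (n:ℝ)^γ/2^γ := by
      rw [div_eq_mul_one_div ((n:ℝ)^γ) 4, div_eq_mul_one_div ((n:ℝ)^γ) (2^γ)]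
      exact mul_le_mul_of_nonneg_left h9 e5
    have h11 := mul_le_mul_of_nonneg_left h10 e6
    linarith [h11]
  linarith

/-- level 0 has a unique vertex -/
lemma s_zero : gammaSphere γ 0 = 1 := by
  unfold gammaSphere
  norm_num

lemma eq_of_level_zero {o x : AntiTree (gammaSphere γ)} (ho : o.1 = 0) (hx : x.1 = 0) :
    x = o := by
  obtain ⟨a, i⟩ := x
  obtain ⟨b, j⟩ := o
  have ha : a = 0 := hx
  have hb : b = 0 := ho
  subst ha
  subst hb
  have h1 : i = j := by
    have h2 := i.2
    have h3 := j.2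
    have h4 := s_zero (γ := γ)
    apply Fin.ext
    omega
  rw [h1]

/-- `ρ(x, o) = W(|x|)` -/
lemma rho_root (hγ0 : 0 ≤ γ) {o : AntiTree (gammaSphere γ)} (ho : o.1 = 0)
    (x : AntiTree (gammaSphere γ)) :
    AntiTree.rho (gammaSphere γ) x o = WW (gammaSphere γ) x.1 := by
  have hs1 := s_pos hγ0
  have hsm := s_mono hγ0
  rcases Nat.eq_zero_or_pos x.1 with h | h
  · rw [eq_of_level_zero ho h, rho_self hs1 hsm, ho, WW_zero]
  · have hne : x.1 ≠ o.1 := by omega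
    rw [rho_eq_of_ne hs1 hsm hne, ho, WW_zero]
    rw [abs_of_nonpos (by linarith [WW_nonneg (s := gammaSphere γ) x.1])]
    ring

/-- edge weights are at most 1 -/
lemma ww_le_one (hγ0 : 0 ≤ γ) (k : ℕ) : ww (gammaSphere γ) k ≤ 1 := by
  have h1 : (1:ℝ) ≤ DD (gammaSphere γ) (k+1) := by
    have h2 : (1:ℕ) ≤ gammaSphere γ (k+2) := s_pos hγ0 (k+2)
    have h3 : (1:ℝ) ≤ (gammaSphere γ (k+2) : ℝ) := by exact_mod_cast h2
    unfold DD
    have h4 : (0:ℝ) ≤ (if k+1 = 0 then 0 else (gammaSphere γ (k+1-1) : ℝ)) := by positivity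
    have h5 : gammaSphere γ (k+1+1) = gammaSphere γ (k+2) := rfl
    rw [h5]
    linarith
  rw [ww]
  have h6 : 1 / DD (gammaSphere γ) (k+1) ≤ 1 := by
    rw [div_le_one (by linarith)]
    linarith
  calc Real.sqrt (1 / DD (gammaSphere γ) (k+1)) ≤ Real.sqrt 1 := Real.sqrt_le_sqrt h6
    _ = 1 := Real.sqrt_one

/-- bound on the level from a bound on the distance from the root -/
lemma level_bound (hγ0 : 0 ≤ γ) (hγ2 : γ < 2) {a : ℕ} {R : ℝ}
    (h : WW (gammaSphere γ) a ≤ R) :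
    (a:ℝ) ≤ (R / (Real.sqrt (1/8) / 2)) ^ ((1 - γ/2)⁻¹) := by
  have hR : 0 ≤ R := le_trans (WW_nonneg a) h
  have hc : (0:ℝ) < Real.sqrt (1/8) / 2 := by
    have : (0:ℝ) < Real.sqrt (1/8) := Real.sqrt_pos.2 (by norm_num)
    linarith
  rcases Nat.eq_zero_or_pos a with rfl | ha
  · rw [Nat.cast_zero]
    positivity
  · have h1 := WW_ge_rpow hγ0 hγ2 a ha
    have h2 : (a:ℝ) ^ (1 - γ/2) ≤ R / (Real.sqrt (1/8) / 2) := by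
      rw [le_div_iff₀ hc]
      nlinarith [h1]
    exact (Real.le_rpow_inv_iff_of_pos (by positivity) (by positivity) (by linarith)).2 h2

/-- balls are contained in finitely many levels -/
lemma ball_levels (hγ0 : 0 ≤ γ) (hγ2 : γ < 2) (x : AntiTree (gammaSphere γ)) {r B : ℝ}
    (hB : WW (gammaSphere γ) x.1 + r ≤ B) :
    ∀ y : AntiTree (gammaSphere γ), y ∈ AntiTree.ball (gammaSphere γ) x r →
      y.1 ∈ Finset.range (⌊(B / (Real.sqrt (1/8) / 2)) ^ ((1 - γ/2)⁻¹)⌋₊ + 1) := by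
  intro y hy
  have hs1 := s_pos hγ0
  have hsm := s_mono hγ0
  have h1 : AntiTree.rho (gammaSphere γ) x y ≤ r := hy
  have h2 := rho_ge hs1 hsm x y
  have h3 : WW (gammaSphere γ) y.1 ≤ B := by
    have h4 := abs_le.1 (le_trans h2 h1)
    linarith [h4.2]
  have h5 := level_bound hγ0 hγ2 h3
  rw [Finset.mem_range, Nat.lt_succ_iff]
  exact Nat.le_floor h5

lemma ball_finite (hγ0 : 0 ≤ γ) (hγ2 : γ < 2) (x : AntiTree (gammaSphere γ)) (r : ℝ) :
    (AntiTree.ball (gammaSphere γ) x r).Finite := by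
  apply Set.Finite.subset (levels_finite
    (Finset.range (⌊((WW (gammaSphere γ) x.1 + r) / (Real.sqrt (1/8) / 2)) ^ ((1 - γ/2)⁻¹)⌋₊ + 1)))
  intro y hy
  exact ball_levels hγ0 hγ2 x (le_refl _) y hy

lemma two_rpow_le (hγ0 : 0 ≤ γ) (hγ2 : γ < 2) {e : ℝ} (he : e ≤ 3) : (2:ℝ) ^ e ≤ 8 := by
  have h1 : (2:ℝ) ^ e ≤ (2:ℝ) ^ (3:ℝ) := Real.rpow_le_rpow_of_exponent_le one_le_two he
  have h2 : (2:ℝ) ^ (3:ℝ) = 8 := by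
    rw [show (3:ℝ) = ((3:ℕ):ℝ) by norm_num, Real.rpow_natCast]
    norm_num
  linarith

lemma c1_pos : (0:ℝ) < Real.sqrt (1/8) / 2 := by
  have : (0:ℝ) < Real.sqrt (1/8) := Real.sqrt_pos.2 (by norm_num)
  linarith

lemma c1_le_one : Real.sqrt (1/8) / 2 ≤ 1 := by
  have h1 : Real.sqrt (1/8) ≤ Real.sqrt 1 := Real.sqrt_le_sqrt (by norm_num)
  rw [Real.sqrt_one] at h1
  linarith

lemma exp_id (hγ2 : γ < 2) : (1 - γ/2)⁻¹ * (γ + 1) = 2*(γ+1)/(2-γ) := by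
  have h1 : (1:ℝ) - γ/2 ≠ 0 := by
    intro h
    have : γ = 2 := by linarith
    linarith
  have h2 : (2:ℝ) - γ ≠ 0 := by
    intro h
    have : γ = 2 := by linarith
    linarith
  field_simp

/-- Regime (i), upper bound -/
lemma upper_i (hγ0 : 0 ≤ γ) (hγ2 : γ < 2) {o : AntiTree (gammaSphere γ)} (ho : o.1 = 0) :
    ∃ C : ℝ, 0 < C ∧ ∀ (x : AntiTree (gammaSphere γ)) (r : ℝ),
      max 1 (AntiTree.rho (gammaSphere γ) x o) ≤ r →
      ((AntiTree.ball (gammaSphere γ) x r).ncard : ℝ) ≤ C * r ^ (2*(γ+1)/(2-γ)) := by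
  set c₁ : ℝ := Real.sqrt (1/8) / 2 with hc₁def
  have hc₁ : 0 < c₁ := c1_pos
  set β : ℝ := 1 - γ/2 with hβdef
  have hβ : 0 < β := by rw [hβdef]; linarith
  refine ⟨8 * (2/c₁) ^ (2*(γ+1)/(2-γ)), by positivity, ?_⟩
  intro x r hr
  have hr1 : (1:ℝ) ≤ r := le_trans (le_max_left _ _) hr
  have hrx : WW (gammaSphere γ) x.1 ≤ r := by
    have h := le_trans (le_max_right _ _) hr
    rwa [rho_root hγ0 ho x] at h
  have hB : WW (gammaSphere γ) x.1 + r ≤ 2*r := by linarith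
  have hsub := ball_levels hγ0 hγ2 x hB
  set N := ⌊((2*r) / c₁) ^ (β⁻¹)⌋₊ with hN
  have h1 : (AntiTree.ball (gammaSphere γ) x r).ncard ≤ ∑ b ∈ Finset.range (N+1), gammaSphere γ b :=
    ncard_le_of_subset_levels hsub
  have h1' : ((AntiTree.ball (gammaSphere γ) x r).ncard : ℝ)
      ≤ ∑ b ∈ Finset.range (N+1), (gammaSphere γ b : ℝ) := by
    have := Nat.cast_le (α := ℝ).2 h1
    push_cast at this
    exact_mod_cast this
  have h2 := sum_s_le hγ0 N
  set M : ℝ := ((2*r) / c₁) ^ (β⁻¹) with hM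
  have hMnn : 0 ≤ M := Real.rpow_nonneg (by positivity) _
  have h3 : (N:ℝ) ≤ M := Nat.floor_le hMnn
  have hbase1 : (1:ℝ) ≤ (2*r)/c₁ := by
    rw [le_div_iff₀ hc₁]
    have := c1_le_one
    rw [← hc₁def] at this
    linarith
  have h4 : (1:ℝ) ≤ M := by
    rw [hM]
    calc (1:ℝ) = 1 ^ (β⁻¹) := (Real.one_rpow _).symm
      _ ≤ ((2*r)/c₁) ^ (β⁻¹) := Real.rpow_le_rpow (by norm_num) hbase1 (by positivity)
  have h5 : ((N:ℝ)+1) ^ (γ+1) ≤ (2*M) ^ (γ+1) :=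
    Real.rpow_le_rpow (by positivity) (by linarith) (by linarith)
  have h6 : ((2:ℝ)*M) ^ (γ+1) = 2 ^ (γ+1) * M ^ (γ+1) :=
    Real.mul_rpow (by norm_num) hMnn
  have h7 : (2:ℝ) ^ (γ+1) ≤ 8 := two_rpow_le hγ0 hγ2 (by linarith)
  have h8 : M ^ (γ+1) = ((2*r)/c₁) ^ (β⁻¹ * (γ+1)) := by
    rw [hM, ← Real.rpow_mul (by positivity)]
  have h9 : β⁻¹ * (γ+1) = 2*(γ+1)/(2-γ) := by
    rw [hβdef]
    exact exp_id hγ2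
  have h10 : ((2*r)/c₁) ^ (2*(γ+1)/(2-γ)) = (2/c₁) ^ (2*(γ+1)/(2-γ)) * r ^ (2*(γ+1)/(2-γ)) := by
    rw [show (2*r)/c₁ = (2/c₁)*r by ring]
    exact Real.mul_rpow (by positivity) (by linarith)
  have hMnn2 : (0:ℝ) ≤ M ^ (γ+1) := Real.rpow_nonneg hMnn _
  calc ((AntiTree.ball (gammaSphere γ) x r).ncard : ℝ)
      ≤ ∑ b ∈ Finset.range (N+1), (gammaSphere γ b : ℝ) := h1'
    _ ≤ ((N:ℝ)+1) ^ (γ+1) := h2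
    _ ≤ (2*M) ^ (γ+1) := h5
    _ = 2 ^ (γ+1) * M ^ (γ+1) := h6
    _ ≤ 8 * M ^ (γ+1) := mul_le_mul_of_nonneg_right h7 hMnn2
    _ = 8 * ((2/c₁) ^ (2*(γ+1)/(2-γ)) * r ^ (2*(γ+1)/(2-γ))) := by rw [h8, h9, h10]
    _ = 8 * (2/c₁) ^ (2*(γ+1)/(2-γ)) * r ^ (2*(γ+1)/(2-γ)) := by ring

/-- `t^β = base` for `t = base^(β⁻¹)` -/
lemma rpow_inv_rpow {base β : ℝ} (hb : 0 ≤ base) (hβ : 0 < β) :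
    (base ^ (β⁻¹)) ^ β = base := by
  rw [← Real.rpow_mul hb, inv_mul_cancel₀ (ne_of_gt hβ), Real.rpow_one]

lemma rpow_rpow_inv {a β : ℝ} (ha : 0 ≤ a) (hβ : 0 < β) :
    (a ^ β) ^ (β⁻¹) = a := by
  rw [← Real.rpow_mul ha, mul_inv_cancel₀ (ne_of_gt hβ), Real.rpow_one]

set_option maxHeartbeats 1000000 in
/-- Regime (i), lower bound -/
lemma lower_i (hγ0 : 0 ≤ γ) (hγ2 : γ < 2) {o : AntiTree (gammaSphere γ)} (ho : o.1 = 0) :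
    ∃ c : ℝ, 0 < c ∧ ∀ (x : AntiTree (gammaSphere γ)) (r : ℝ),
      max 1 (AntiTree.rho (gammaSphere γ) x o) ≤ r →
      c * r ^ (2*(γ+1)/(2-γ)) ≤ ((AntiTree.ball (gammaSphere γ) x r).ncard : ℝ) := by
  have hs1 := s_pos hγ0
  have hsm := s_mono hγ0
  set c₁ : ℝ := Real.sqrt (1/8) / 2 with hc₁def
  have hc₁ : 0 < c₁ := c1_pos
  set β : ℝ := 1 - γ/2 with hβdef
  have hβ : 0 < β := by rw [hβdef]; linarith
  set d : ℝ := 2*(γ+1)/(2-γ) with hddef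
  have hd0 : 0 ≤ d := by
    rw [hddef]
    have h2γ : (0:ℝ) < 2 - γ := by linarith
    positivity
  set c₂ : ℝ := Real.sqrt 2 / (1 - γ/2) with hc₂def
  have hc₂ : 0 < c₂ := by
    rw [hc₂def]
    have : (0:ℝ) < Real.sqrt 2 := Real.sqrt_pos.2 (by norm_num)
    have h2 : (0:ℝ) < 1 - γ/2 := by linarith
    positivity
  set K : ℝ := (c₂/c₁) ^ (β⁻¹) with hKdef
  have hK : 0 ≤ K := Real.rpow_nonneg (by positivity) _
  set K₂ : ℝ := (K+1) ^ (2:ℝ) with hK₂def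
  have hK₂ : 0 < K₂ := Real.rpow_pos_of_pos (by linarith) _
  set T : ℝ := max 2 (256*K₂) with hTdef
  have hT2 : (2:ℝ) ≤ T := le_max_left _ _
  have hTK : 256*K₂ ≤ T := le_max_right _ _
  set R₀ : ℝ := c₂ * T ^ β with hR₀def
  have hR₀ : 0 < R₀ := by
    have : (0:ℝ) < T ^ β := Real.rpow_pos_of_pos (by linarith) _
    positivity
  have hcBpos : (0:ℝ) < (256 * c₂ ^ d)⁻¹ := by
    have : (0:ℝ) < c₂ ^ d := Real.rpow_pos_of_pos hc₂ _
    positivity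
  have hcRpos : (0:ℝ) < (R₀ ^ d)⁻¹ := by
    have : (0:ℝ) < R₀ ^ d := Real.rpow_pos_of_pos hR₀ _
    positivity
  refine ⟨min ((256 * c₂ ^ d)⁻¹) ((R₀ ^ d)⁻¹), lt_min hcBpos hcRpos, ?_⟩
  intro x r hr
  set a := x.1 with hadef
  have hr1 : (1:ℝ) ≤ r := le_trans (le_max_left _ _) hr
  have hrx : WW (gammaSphere γ) a ≤ r := by
    have h := le_trans (le_max_right _ _) hr
    rwa [rho_root hγ0 ho x] at h
  set t : ℝ := (r/c₂) ^ (β⁻¹) with htdef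
  have htnn : 0 ≤ t := Real.rpow_nonneg (by positivity) _
  have htβ : t ^ β = r / c₂ := rpow_inv_rpow (by positivity) hβ
  have hrt : r = c₂ * t ^ β := by
    rw [htβ]
    field_simp
  set n := ⌊t⌋₊ with hndef
  -- the punctured level set is inside the ball
  have hmem : ∀ y : AntiTree (gammaSphere γ),
      y.1 ∈ (Finset.range (n+1)).erase a → y ∈ AntiTree.ball (gammaSphere γ) x r := by
    intro y hy
    rw [Finset.mem_erase, Finset.mem_range, Nat.lt_succ_iff] at hy
    obtain ⟨hya, hyn⟩ := hy
    have hne : x.1 ≠ y.1 := fun h => hya (h.symm)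
    have hrho := rho_eq_of_ne hs1 hsm hne
    have hWy : WW (gammaSphere γ) y.1 ≤ r := by
      calc WW (gammaSphere γ) y.1 ≤ WW (gammaSphere γ) n := WW_mono hyn
        _ ≤ c₂ * (n:ℝ) ^ β := by
            have := WW_le_rpow hγ0 hγ2 n
            rw [← hc₂def, ← hβdef] at this
            exact this
        _ ≤ c₂ * t ^ β := by
            apply mul_le_mul_of_nonneg_left _ (le_of_lt hc₂)
            exact Real.rpow_le_rpow (by positivity) (Nat.floor_le htnn) (le_of_lt hβ)
        _ = r := hrt.symm
    have habs : |WW (gammaSphere γ) y.1 - WW (gammaSphere γ) a| ≤ r := by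
      rw [abs_le]
      constructor
      · have := WW_nonneg (s := gammaSphere γ) y.1
        linarith
      · have := WW_nonneg (s := gammaSphere γ) a
        linarith
    show AntiTree.rho (gammaSphere γ) x y ≤ r
    rw [hrho]
    exact habs
  have hfin := ball_finite hγ0 hγ2 x r
  have hcount := le_ncard_of_levels_subset hfin hmem
  have hcount' : ∑ b ∈ (Finset.range (n+1)).erase a, (gammaSphere γ b : ℝ)
      ≤ ((AntiTree.ball (gammaSphere γ) x r).ncard : ℝ) := by
    have := Nat.cast_le (α := ℝ).2 hcount
    push_cast at this
    exact_mod_cast this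
  have hsplit : (∑ b ∈ Finset.range (n+1), (gammaSphere γ b : ℝ)) - (gammaSphere γ a : ℝ)
      ≤ ∑ b ∈ (Finset.range (n+1)).erase a, (gammaSphere γ b : ℝ) := by
    by_cases ha : a ∈ Finset.range (n+1)
    · rw [Finset.sum_erase_eq_sub ha]
    · rw [Finset.erase_eq_of_notMem ha]
      have : (0:ℝ) ≤ (gammaSphere γ a : ℝ) := by positivity
      linarith
  have hsumge := sum_s_ge hγ0 hγ2 n
  have hsa : (gammaSphere γ a : ℝ) ≤ ((a:ℝ)+1) ^ γ := s_le a
  -- case split on t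
  rcases lt_or_ge t T with hcase | hcase
  · -- bounded case
    have hx : x ∈ AntiTree.ball (gammaSphere γ) x r := by
      show AntiTree.rho (gammaSphere γ) x x ≤ r
      rw [rho_self hs1 hsm]
      linarith
    have h1 : 0 < (AntiTree.ball (gammaSphere γ) x r).ncard :=
      (Set.ncard_pos hfin).2 ⟨x, hx⟩
    have h2 : (1:ℝ) ≤ ((AntiTree.ball (gammaSphere γ) x r).ncard : ℝ) := by
      exact_mod_cast h1
    have h3 : r ≤ R₀ := by
      rw [hrt, hR₀def]
      apply mul_le_mul_of_nonneg_left _ (le_of_lt hc₂)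
      exact Real.rpow_le_rpow htnn (le_of_lt hcase) (le_of_lt hβ)
    have h4 : r ^ d ≤ R₀ ^ d := Real.rpow_le_rpow (by linarith) h3 hd0
    have h5 : min ((256 * c₂ ^ d)⁻¹) ((R₀ ^ d)⁻¹) * r ^ d ≤ (R₀ ^ d)⁻¹ * R₀ ^ d := by
      apply mul_le_mul (min_le_right _ _) h4 (Real.rpow_nonneg (by linarith) _) (le_of_lt hcRpos)
    rw [inv_mul_cancel₀ (ne_of_gt (Real.rpow_pos_of_pos hR₀ d))] at h5
    linarith
  · -- main case : t ≥ T ≥ 2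
    have ht2 : (2:ℝ) ≤ t := le_trans hT2 hcase
    have hn2 : t/2 ≤ (n:ℝ) := by
      have := Nat.lt_floor_add_one t
      rw [← hndef] at this
      linarith
    -- bound on a
    have haK : (a:ℝ) ≤ K * t := by
      rcases Nat.eq_zero_or_pos a with ha0 | ha1
      · rw [ha0, Nat.cast_zero]
        positivity
      · have h1 : c₁ * (a:ℝ) ^ β ≤ r := by
          have := WW_ge_rpow hγ0 hγ2 a ha1
          rw [← hc₁def, ← hβdef] at this
          linarith
        have h2 : (a:ℝ) ^ β ≤ (c₂/c₁) * t ^ β := by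
          rw [htβ]
          have hc₁' : c₁ ≠ 0 := ne_of_gt hc₁
          have hc₂' : c₂ ≠ 0 := ne_of_gt hc₂
          have he : (c₂/c₁) * (r/c₂) = r/c₁ := by
            field_simp
          rw [he, le_div_iff₀ hc₁]
          calc (a:ℝ) ^ β * c₁ = c₁ * (a:ℝ) ^ β := by ring
            _ ≤ r := h1
        have h3 : ((a:ℝ) ^ β) ^ (β⁻¹) ≤ ((c₂/c₁) * t ^ β) ^ (β⁻¹) :=
          Real.rpow_le_rpow (by positivity) h2 (by positivity)
        rw [rpow_rpow_inv (by positivity) hβ] at h3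
        rw [Real.mul_rpow (by positivity) (by positivity)] at h3
        rw [rpow_rpow_inv htnn hβ] at h3
        rw [← hKdef] at h3
        exact h3
    have hsaK : (gammaSphere γ a : ℝ) ≤ K₂ * t ^ γ := by
      have h1 : (a:ℝ) + 1 ≤ (K+1) * t := by
        have ht1 : (1:ℝ) ≤ t := by linarith
        have hKt : (K+1) * t = K*t + t := by ring
        rw [hKt]
        linarith [haK]
      have h2 : ((a:ℝ)+1) ^ γ ≤ ((K+1)*t) ^ γ :=
        Real.rpow_le_rpow (by positivity) h1 hγ0
      have h3 : ((K+1)*t) ^ γ = (K+1) ^ γ * t ^ γ :=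
        Real.mul_rpow (by linarith) htnn
      have h4 : (K+1) ^ γ ≤ K₂ := by
        rw [hK₂def]
        exact Real.rpow_le_rpow_of_exponent_le (by linarith) (by linarith)
      have h5 : (0:ℝ) ≤ t ^ γ := Real.rpow_nonneg htnn _
      calc (gammaSphere γ a : ℝ) ≤ ((a:ℝ)+1) ^ γ := hsa
        _ ≤ (K+1) ^ γ * t ^ γ := by rw [← h3]; exact h2
        _ ≤ K₂ * t ^ γ := mul_le_mul_of_nonneg_right h4 h5
    -- volume lower bound
    have hu : (0:ℝ) < t ^ (γ+1) := Real.rpow_pos_of_pos (by linarith) _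
    have hAt : t ^ (γ+1) = t ^ γ * t := by
      rw [Real.rpow_add (by linarith : (0:ℝ) < t), Real.rpow_one]
    have hnA : t ^ (γ+1) / 128 ≤ (n:ℝ) ^ (γ+1) / 16 := by
      have h1 : (t/2) ^ (γ+1) ≤ (n:ℝ) ^ (γ+1) :=
        Real.rpow_le_rpow (by linarith) hn2 (by linarith)
      have h2 : (t/2) ^ (γ+1) = t ^ (γ+1) / 2 ^ (γ+1) :=
        Real.div_rpow htnn (by norm_num) _
      have h3 : (2:ℝ) ^ (γ+1) ≤ 8 := two_rpow_le hγ0 hγ2 (by linarith)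
      have h4 : (0:ℝ) < (2:ℝ) ^ (γ+1) := Real.rpow_pos_of_pos (by norm_num) _
      have h5 : t ^ (γ+1) / 8 ≤ t ^ (γ+1) / 2 ^ (γ+1) := by
        rw [div_le_div_iff₀ (by norm_num : (0:ℝ) < 8) h4]
        calc t ^ (γ+1) * 2 ^ (γ+1) ≤ t ^ (γ+1) * 8 :=
            mul_le_mul_of_nonneg_left h3 (le_of_lt hu)
          _ = t ^ (γ+1) / 8 * 8 * 8 := by ring
          _ ≤ t ^ (γ+1) / 8 * 8 * 8 := le_refl _
          _ = t ^ (γ+1) * 8 := by ring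
      rw [← h2] at h5
      linarith [h5, h1]
    have hsA : (gammaSphere γ a : ℝ) ≤ t ^ (γ+1) / 256 := by
      have h2 : 256 * K₂ ≤ t := le_trans hTK hcase
      have h3 : (0:ℝ) < t ^ γ := Real.rpow_pos_of_pos (by linarith) _
      have h4 := mul_le_mul_of_nonneg_left h2 (le_of_lt h3)
      calc (gammaSphere γ a : ℝ) ≤ K₂ * t ^ γ := hsaK
        _ ≤ t ^ γ * t / 256 := by linarith [h4]
        _ = t ^ (γ+1) / 256 := by rw [hAt]
    have hA256 : t ^ (γ+1) / 256 ≤ ((AntiTree.ball (gammaSphere γ) x r).ncard : ℝ) := by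
      linarith [hsumge, hsplit, hcount', hnA, hsA]
    -- convert to r^d
    have hAr : t ^ (γ+1) = r ^ d / c₂ ^ d := by
      rw [htdef, ← Real.rpow_mul (by positivity)]
      have he : β⁻¹ * (γ+1) = d := by
        rw [hβdef, hddef]
        exact exp_id hγ2
      rw [he]
      exact Real.div_rpow (by linarith) (le_of_lt hc₂) d
    have hfinal : min ((256 * c₂ ^ d)⁻¹) ((R₀ ^ d)⁻¹) * r ^ d ≤ t ^ (γ+1) / 256 := by
      have h1 : min ((256 * c₂ ^ d)⁻¹) ((R₀ ^ d)⁻¹) ≤ (256 * c₂ ^ d)⁻¹ := min_le_left _ _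
      have h2 : (0:ℝ) ≤ r ^ d := Real.rpow_nonneg (by linarith) _
      have h3 : min ((256 * c₂ ^ d)⁻¹) ((R₀ ^ d)⁻¹) * r ^ d ≤ (256 * c₂ ^ d)⁻¹ * r ^ d :=
        mul_le_mul_of_nonneg_right h1 h2
      have h4 : (256 * c₂ ^ d)⁻¹ * r ^ d = t ^ (γ+1) / 256 := by
        rw [hAr]
        have hcd : (0:ℝ) < c₂ ^ d := Real.rpow_pos_of_pos hc₂ _
        field_simp
      linarith
    linarith

set_option maxHeartbeats 1000000 in
/-- Regime (ii), upper bound -/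
lemma upper_ii (hγ0 : 0 ≤ γ) (hγ2 : γ < 2) {o : AntiTree (gammaSphere γ)} (ho : o.1 = 0) :
    ∃ C : ℝ, 0 < C ∧ ∀ (x : AntiTree (gammaSphere γ)) (r : ℝ),
      1 ≤ r → r ≤ AntiTree.rho (gammaSphere γ) x o →
      ((AntiTree.ball (gammaSphere γ) x r).ncard : ℝ)
        ≤ C * (r * AntiTree.rho (gammaSphere γ) x o ^ (2*(γ+1)/(2-γ) - 1)) := by
  have hs1 := s_pos hγ0
  have hsm := s_mono hγ0
  set c₁ : ℝ := Real.sqrt (1/8) / 2 with hc₁def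
  have hc₁ : 0 < c₁ := c1_pos
  have hc₁1 : c₁ ≤ 1 := c1_le_one
  set sq8 : ℝ := Real.sqrt (1/8) with hsq8def
  have hsq8 : 0 < sq8 := by rw [hsq8def]; exact Real.sqrt_pos.2 (by norm_num)
  have hsq81 : sq8 ≤ 1 := by
    rw [hsq8def]
    have := Real.sqrt_le_sqrt (show (1:ℝ)/8 ≤ 1 by norm_num)
    rwa [Real.sqrt_one] at this
  set β : ℝ := 1 - γ/2 with hβdef
  have hβ : 0 < β := by rw [hβdef]; linarith
  set d : ℝ := 2*(γ+1)/(2-γ) with hddef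
  have hd1 : 1 ≤ d := by
    rw [hddef, le_div_iff₀ (by linarith : (0:ℝ) < 2 - γ)]
    linarith
  set c₂ : ℝ := Real.sqrt 2 / (1 - γ/2) with hc₂def
  have hc₂ : 0 < c₂ := by
    rw [hc₂def]
    have : (0:ℝ) < Real.sqrt 2 := Real.sqrt_pos.2 (by norm_num)
    have h2 : (0:ℝ) < 1 - γ/2 := by linarith
    positivity
  have hc₂1 : 1 ≤ c₂ := by
    rw [hc₂def]
    rw [le_div_iff₀ (by linarith : (0:ℝ) < 1 - γ/2)]
    have h1 : (1:ℝ) ≤ Real.sqrt 2 := by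
      have := Real.sqrt_le_sqrt (show (1:ℝ) ≤ 2 by norm_num)
      rwa [Real.sqrt_one] at this
    linarith
  set K : ℝ := (2*c₂/c₁) ^ (β⁻¹) with hKdef
  have hKbase : (1:ℝ) ≤ 2*c₂/c₁ := by
    rw [le_div_iff₀ hc₁]
    linarith
  have hK1 : (1:ℝ) ≤ K := by
    rw [hKdef]
    calc (1:ℝ) = 1 ^ (β⁻¹) := (Real.one_rpow _).symm
      _ ≤ (2*c₂/c₁) ^ (β⁻¹) := Real.rpow_le_rpow (by norm_num) hKbase (by positivity)
  set C₅ : ℝ := c₂ * (K+1) / sq8 with hC₅def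
  have hC₅ : 0 < C₅ := by positivity
  set C₆ : ℝ := (C₅+2) ^ (2:ℝ) with hC₆def
  have hC₆ : 0 < C₆ := Real.rpow_pos_of_pos (by linarith) _
  have hcd : (0:ℝ) < c₁ ^ (d-1) := Real.rpow_pos_of_pos hc₁ _
  refine ⟨3 * (K+1) / sq8 * C₆ / c₁ ^ (d-1), by positivity, ?_⟩
  intro x r hr1 hrW
  rw [rho_root hγ0 ho x] at hrW ⊢
  set a := x.1 with hadef
  have hWa : (1:ℝ) ≤ WW (gammaSphere γ) a := le_trans hr1 hrW
  have ha1 : 1 ≤ a := by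
    by_contra h
    have h0 : a = 0 := by omega
    rw [h0, WW_zero] at hWa
    linarith
  have ha1R : (1:ℝ) ≤ (a:ℝ) := by exact_mod_cast ha1
  have hapos : (0:ℝ) < (a:ℝ) := by linarith
  have hWc₂ : WW (gammaSphere γ) a ≤ c₂ * (a:ℝ) ^ β := by
    have := WW_le_rpow hγ0 hγ2 a
    rw [← hc₂def, ← hβdef] at this
    exact this
  -- level cap
  have hcap : ∀ y : AntiTree (gammaSphere γ), y ∈ AntiTree.ball (gammaSphere γ) x r →
      (y.1 : ℝ) ≤ K * (a:ℝ) := by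
    intro y hy
    have h1 : AntiTree.rho (gammaSphere γ) x y ≤ r := hy
    have h2 := rho_ge hs1 hsm x y
    have h3 : WW (gammaSphere γ) y.1 ≤ 2 * (c₂ * (a:ℝ) ^ β) := by
      have h4 := (abs_le.1 (le_trans h2 h1)).2
      have := WW_nonneg (s := gammaSphere γ) a
      nlinarith [hrW, hWc₂]
    have h5 := level_bound hγ0 hγ2 h3
    rw [← hc₁def, ← hβdef] at h5
    have h6 : (2 * (c₂ * (a:ℝ) ^ β) / c₁) ^ (β⁻¹) = K * (a:ℝ) := by
      rw [show 2 * (c₂ * (a:ℝ) ^ β) / c₁ = (2*c₂/c₁) * (a:ℝ) ^ β by ring]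
      rw [Real.mul_rpow (by positivity) (by positivity)]
      rw [rpow_rpow_inv (le_of_lt hapos) hβ, ← hKdef]
    rw [h6] at h5
    exact h5
  -- width bound
  set Δ : ℝ := r * (K+1) * (a:ℝ) ^ (γ/2) / sq8 with hΔdef
  have haγ : (1:ℝ) ≤ (a:ℝ) ^ (γ/2) := by
    calc (1:ℝ) = 1 ^ (γ/2) := (Real.one_rpow _).symm
      _ ≤ (a:ℝ) ^ (γ/2) := Real.rpow_le_rpow (by norm_num) ha1R (by linarith)
  have hΔ1 : (1:ℝ) ≤ Δ := by
    rw [hΔdef, le_div_iff₀ hsq8]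
    have : (1:ℝ) ≤ r * (K+1) := by nlinarith
    nlinarith [haγ]
  have hq : ∀ b : ℕ, (b:ℝ) ≤ K * (a:ℝ) → ((b:ℝ)+1) ^ (γ/2) ≤ (K+1) * (a:ℝ) ^ (γ/2) := by
    intro b hb
    have h1 : (b:ℝ) + 1 ≤ (K+1) * (a:ℝ) := by nlinarith [hK1, ha1R]
    have h2 : ((b:ℝ)+1) ^ (γ/2) ≤ ((K+1) * (a:ℝ)) ^ (γ/2) :=
      Real.rpow_le_rpow (by positivity) h1 (by linarith)
    have h3 : ((K+1) * (a:ℝ)) ^ (γ/2) = (K+1) ^ (γ/2) * (a:ℝ) ^ (γ/2) :=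
      Real.mul_rpow (by linarith) (by positivity)
    have h4 : (K+1) ^ (γ/2) ≤ K+1 := by
      have h5 : (K+1) ^ (γ/2) ≤ (K+1) ^ (1:ℝ) :=
        Real.rpow_le_rpow_of_exponent_le (by linarith) (by linarith)
      rwa [Real.rpow_one] at h5
    have h6 : (0:ℝ) ≤ (a:ℝ) ^ (γ/2) := by positivity
    calc ((b:ℝ)+1) ^ (γ/2) ≤ (K+1) ^ (γ/2) * (a:ℝ) ^ (γ/2) := by rw [← h3]; exact h2
      _ ≤ (K+1) * (a:ℝ) ^ (γ/2) := mul_le_mul_of_nonneg_right h4 h6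
  -- generic inversion of the weight estimate
  have hinv : ∀ (m : ℕ) (b : ℕ), (b:ℝ) ≤ K * (a:ℝ) →
      sq8 * (m:ℝ) * ((b:ℝ)+1) ^ (-(γ/2)) ≤ r → (m:ℝ) ≤ Δ := by
    intro m b hb hle
    have hbp : (0:ℝ) < ((b:ℝ)+1) ^ (γ/2) := Real.rpow_pos_of_pos (by positivity) _
    have h1 : ((b:ℝ)+1) ^ (-(γ/2)) = (((b:ℝ)+1) ^ (γ/2))⁻¹ :=
      Real.rpow_neg (by positivity) _
    rw [h1] at hle
    have h2 : sq8 * (m:ℝ) ≤ r * ((b:ℝ)+1) ^ (γ/2) := by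
      have h3 : sq8 * (m:ℝ) * (((b:ℝ)+1) ^ (γ/2))⁻¹ * ((b:ℝ)+1) ^ (γ/2)
          ≤ r * ((b:ℝ)+1) ^ (γ/2) := mul_le_mul_of_nonneg_right hle (le_of_lt hbp)
      rw [mul_assoc, inv_mul_cancel₀ (ne_of_gt hbp), mul_one] at h3
      exact h3
    have h4 : r * ((b:ℝ)+1) ^ (γ/2) ≤ r * ((K+1) * (a:ℝ) ^ (γ/2)) :=
      mul_le_mul_of_nonneg_left (hq b hb) (by linarith)
    rw [hΔdef, le_div_iff₀ hsq8]
    calc (m:ℝ) * sq8 = sq8 * (m:ℝ) := by ring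
      _ ≤ r * ((K+1) * (a:ℝ) ^ (γ/2)) := le_trans h2 h4
      _ = r * (K+1) * (a:ℝ) ^ (γ/2) := by ring
  -- ball is inside a narrow annulus of levels
  have hann : ∀ y : AntiTree (gammaSphere γ), y ∈ AntiTree.ball (gammaSphere γ) x r →
      y.1 ∈ Finset.Icc (a - ⌊Δ⌋₊) (a + ⌊Δ⌋₊) := by
    intro y hy
    have hrho : AntiTree.rho (gammaSphere γ) x y ≤ r := hy
    have habs := le_trans (rho_ge hs1 hsm x y) hrho
    have hyK := hcap y hy
    rw [Finset.mem_Icc]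
    constructor
    · -- lower bound on the level
      rcases le_or_gt a y.1 with h | h
      · omega
      · have hd1' := WW_diff_ge hγ0 hγ2 (le_of_lt h)
        have h2 : WW (gammaSphere γ) a - WW (gammaSphere γ) y.1 ≤ r := by
          have := (abs_le.1 habs).1
          linarith
        have h3 : sq8 * ((a - y.1 : ℕ):ℝ) * ((a:ℝ)+1) ^ (-(γ/2)) ≤ r := by
          rw [hsq8def]
          exact le_trans hd1' h2
        have h4 : ((a - y.1 : ℕ):ℝ) ≤ Δ := hinv (a - y.1) a (by nlinarith [hK1]) h3
        have h5 : a - y.1 ≤ ⌊Δ⌋₊ := Nat.le_floor h4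
        omega
    · -- upper bound on the level
      rcases le_or_gt y.1 a with h | h
      · omega
      · have hd1' := WW_diff_ge hγ0 hγ2 (le_of_lt h)
        have h2 : WW (gammaSphere γ) y.1 - WW (gammaSphere γ) a ≤ r := (abs_le.1 habs).2
        have h3 : sq8 * ((y.1 - a : ℕ):ℝ) * ((y.1:ℝ)+1) ^ (-(γ/2)) ≤ r := by
          rw [hsq8def]
          exact le_trans hd1' h2
        have h4 : ((y.1 - a : ℕ):ℝ) ≤ Δ := hinv (y.1 - a) y.1 hyK h3
        have h5 : y.1 - a ≤ ⌊Δ⌋₊ := Nat.le_floor h4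
        omega
  -- counting
  have hcount := ncard_le_of_subset_levels hann
  have hcount' : ((AntiTree.ball (gammaSphere γ) x r).ncard : ℝ)
      ≤ ∑ b ∈ Finset.Icc (a - ⌊Δ⌋₊) (a + ⌊Δ⌋₊), (gammaSphere γ b : ℝ) := by
    have := Nat.cast_le (α := ℝ).2 hcount
    push_cast at this
    exact_mod_cast this
  -- bound each sphere in the annulus
  have hΔC₅ : Δ ≤ C₅ * (a:ℝ) := by
    rw [hΔdef, hC₅def, div_mul_eq_mul_div, div_le_div_iff₀ hsq8 hsq8]
    have h1 : r * (K+1) * (a:ℝ) ^ (γ/2) ≤ (c₂ * (a:ℝ) ^ β) * (K+1) * (a:ℝ) ^ (γ/2) := by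
      have h2 : r ≤ c₂ * (a:ℝ) ^ β := le_trans hrW hWc₂
      have h3 : (0:ℝ) ≤ (K+1) * (a:ℝ) ^ (γ/2) := by positivity
      calc r * (K+1) * (a:ℝ) ^ (γ/2) = r * ((K+1) * (a:ℝ) ^ (γ/2)) := by ring
        _ ≤ (c₂ * (a:ℝ) ^ β) * ((K+1) * (a:ℝ) ^ (γ/2)) := mul_le_mul_of_nonneg_right h2 h3
        _ = (c₂ * (a:ℝ) ^ β) * (K+1) * (a:ℝ) ^ (γ/2) := by ring
    have h4 : (a:ℝ) ^ β * (a:ℝ) ^ (γ/2) = (a:ℝ) := by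
      rw [← Real.rpow_add hapos, hβdef]
      norm_num
    calc r * (K+1) * (a:ℝ) ^ (γ/2) * sq8 ≤ (c₂ * (a:ℝ) ^ β) * (K+1) * (a:ℝ) ^ (γ/2) * sq8 := by
          have : (0:ℝ) ≤ sq8 := le_of_lt hsq8
          exact mul_le_mul_of_nonneg_right h1 this
      _ = c₂ * (K+1) * ((a:ℝ) ^ β * (a:ℝ) ^ (γ/2)) * sq8 := by ring
      _ = c₂ * (K+1) * (a:ℝ) * sq8 := by rw [h4]
  have hsb : ∀ b ∈ Finset.Icc (a - ⌊Δ⌋₊) (a + ⌊Δ⌋₊),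
      (gammaSphere γ b : ℝ) ≤ C₆ * (a:ℝ) ^ γ := by
    intro b hb
    rw [Finset.mem_Icc] at hb
    have h1 : (b:ℝ) ≤ (a:ℝ) + Δ := by
      have h2 : b ≤ a + ⌊Δ⌋₊ := hb.2
      have h3 : (⌊Δ⌋₊:ℝ) ≤ Δ := Nat.floor_le (by linarith)
      have h4 : (b:ℝ) ≤ (a:ℝ) + (⌊Δ⌋₊:ℝ) := by exact_mod_cast h2
      linarith
    have h5 : (b:ℝ) + 1 ≤ (C₅+2) * (a:ℝ) := by nlinarith [hΔC₅, ha1R]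
    have h6 : ((b:ℝ)+1) ^ γ ≤ ((C₅+2) * (a:ℝ)) ^ γ :=
      Real.rpow_le_rpow (by positivity) h5 hγ0
    have h7 : ((C₅+2) * (a:ℝ)) ^ γ = (C₅+2) ^ γ * (a:ℝ) ^ γ :=
      Real.mul_rpow (by linarith) (by positivity)
    have h8 : (C₅+2) ^ γ ≤ C₆ := by
      rw [hC₆def]
      exact Real.rpow_le_rpow_of_exponent_le (by linarith) (by linarith)
    have h9 : (0:ℝ) ≤ (a:ℝ) ^ γ := by positivity
    calc (gammaSphere γ b : ℝ) ≤ ((b:ℝ)+1) ^ γ := s_le b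
      _ ≤ (C₅+2) ^ γ * (a:ℝ) ^ γ := by rw [← h7]; exact h6
      _ ≤ C₆ * (a:ℝ) ^ γ := mul_le_mul_of_nonneg_right h8 h9
  have hcard : ((Finset.Icc (a - ⌊Δ⌋₊) (a + ⌊Δ⌋₊)).card : ℝ) ≤ 3 * Δ := by
    rw [Nat.card_Icc]
    have h1 : a + ⌊Δ⌋₊ + 1 - (a - ⌊Δ⌋₊) ≤ 2 * ⌊Δ⌋₊ + 1 := by omega
    have h2 : ((a + ⌊Δ⌋₊ + 1 - (a - ⌊Δ⌋₊) : ℕ):ℝ) ≤ 2 * (⌊Δ⌋₊:ℝ) + 1 := by exact_mod_cast h1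
    have h3 : (⌊Δ⌋₊:ℝ) ≤ Δ := Nat.floor_le (by linarith)
    linarith
  have hsum : ∑ b ∈ Finset.Icc (a - ⌊Δ⌋₊) (a + ⌊Δ⌋₊), (gammaSphere γ b : ℝ)
      ≤ 3 * Δ * (C₆ * (a:ℝ) ^ γ) := by
    calc ∑ b ∈ Finset.Icc (a - ⌊Δ⌋₊) (a + ⌊Δ⌋₊), (gammaSphere γ b : ℝ)
        ≤ ((Finset.Icc (a - ⌊Δ⌋₊) (a + ⌊Δ⌋₊)).card : ℝ) * (C₆ * (a:ℝ) ^ γ) := by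
          have := Finset.sum_le_card_nsmul (Finset.Icc (a - ⌊Δ⌋₊) (a + ⌊Δ⌋₊))
            (fun b => (gammaSphere γ b : ℝ)) (C₆ * (a:ℝ) ^ γ) hsb
          rwa [nsmul_eq_mul] at this
      _ ≤ 3 * Δ * (C₆ * (a:ℝ) ^ γ) := by
          apply mul_le_mul_of_nonneg_right hcard (by positivity)
  -- convert a-powers to the distance
  have hkey : 3 * Δ * (C₆ * (a:ℝ) ^ γ)
      ≤ (3 * (K+1) / sq8 * C₆ / c₁ ^ (d-1)) * (r * WW (gammaSphere γ) a ^ (d - 1)) := by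
    have h1 : (a:ℝ) ^ (γ/2) * (a:ℝ) ^ γ = (a:ℝ) ^ (γ/2 + γ) := (Real.rpow_add hapos _ _).symm
    have h2 : (a:ℝ) ^ (γ/2 + γ) ≤ (WW (gammaSphere γ) a / c₁) ^ (d-1) := by
      have h3 : c₁ * (a:ℝ) ^ β ≤ WW (gammaSphere γ) a := by
        have := WW_ge_rpow hγ0 hγ2 a ha1
        rw [← hc₁def, ← hβdef] at this
        exact this
      have h4 : (a:ℝ) ^ β ≤ WW (gammaSphere γ) a / c₁ := by
        rw [le_div_iff₀ hc₁]
        calc (a:ℝ) ^ β * c₁ = c₁ * (a:ℝ) ^ β := by ring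
          _ ≤ _ := h3
      have h5 : ((a:ℝ) ^ β) ^ (d-1) ≤ (WW (gammaSphere γ) a / c₁) ^ (d-1) :=
        Real.rpow_le_rpow (by positivity) h4 (by linarith)
      have h6 : ((a:ℝ) ^ β) ^ (d-1) = (a:ℝ) ^ (γ/2 + γ) := by
        rw [← Real.rpow_mul (le_of_lt hapos)]
        congr 1
        rw [hβdef, hddef]
        have h2γ : (2:ℝ) - γ ≠ 0 := by
          intro h
          have : γ = 2 := by linarith
          linarith
        field_simp
        ring
      rw [← h6]
      exact h5
    have h7 : (WW (gammaSphere γ) a / c₁) ^ (d-1)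
        = WW (gammaSphere γ) a ^ (d-1) / c₁ ^ (d-1) := by
      exact Real.div_rpow (by linarith [hWa]) (le_of_lt hc₁) _
    have h8 : (0:ℝ) ≤ WW (gammaSphere γ) a ^ (d-1) := Real.rpow_nonneg (by linarith) _
    rw [hΔdef]
    rw [h7] at h2
    have h9 : (a:ℝ) ^ (γ/2) * (a:ℝ) ^ γ ≤ WW (gammaSphere γ) a ^ (d-1) / c₁ ^ (d-1) := by
      rw [h1]
      exact h2
    have h10 : (0:ℝ) ≤ 3 * C₆ * (K+1) / sq8 * r := by positivity
    calc 3 * (r * (K+1) * (a:ℝ) ^ (γ/2) / sq8) * (C₆ * (a:ℝ) ^ γ)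
        = (3 * C₆ * (K+1) / sq8 * r) * ((a:ℝ) ^ (γ/2) * (a:ℝ) ^ γ) := by ring
      _ ≤ (3 * C₆ * (K+1) / sq8 * r) * (WW (gammaSphere γ) a ^ (d-1) / c₁ ^ (d-1)) :=
          mul_le_mul_of_nonneg_left h9 h10
      _ = (3 * (K+1) / sq8 * C₆ / c₁ ^ (d-1)) * (r * WW (gammaSphere γ) a ^ (d - 1)) := by
          ring
  calc ((AntiTree.ball (gammaSphere γ) x r).ncard : ℝ)
      ≤ ∑ b ∈ Finset.Icc (a - ⌊Δ⌋₊) (a + ⌊Δ⌋₊), (gammaSphere γ b : ℝ) := hcount'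
    _ ≤ 3 * Δ * (C₆ * (a:ℝ) ^ γ) := hsum
    _ ≤ _ := hkey

set_option maxHeartbeats 1000000 in
/-- Regime (ii), lower bound -/
lemma lower_ii (hγ0 : 0 ≤ γ) (hγ2 : γ < 2) {o : AntiTree (gammaSphere γ)} (ho : o.1 = 0) :
    ∃ c : ℝ, 0 < c ∧ ∀ (x : AntiTree (gammaSphere γ)) (r : ℝ),
      1 ≤ r → r ≤ AntiTree.rho (gammaSphere γ) x o →
      c * (r * AntiTree.rho (gammaSphere γ) x o ^ (2*(γ+1)/(2-γ) - 1))
        ≤ ((AntiTree.ball (gammaSphere γ) x r).ncard : ℝ) := by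
  have hs1 := s_pos hγ0
  have hsm := s_mono hγ0
  set c₁ : ℝ := Real.sqrt (1/8) / 2 with hc₁def
  have hc₁ : 0 < c₁ := c1_pos
  set β : ℝ := 1 - γ/2 with hβdef
  have hβ : 0 < β := by rw [hβdef]; linarith
  set d : ℝ := 2*(γ+1)/(2-γ) with hddef
  have hd1 : 1 ≤ d := by
    rw [hddef, le_div_iff₀ (by linarith : (0:ℝ) < 2 - γ)]
    linarith
  set c₂ : ℝ := Real.sqrt 2 / (1 - γ/2) with hc₂def
  have hc₂ : 0 < c₂ := by
    rw [hc₂def]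
    have : (0:ℝ) < Real.sqrt 2 := Real.sqrt_pos.2 (by norm_num)
    have h2 : (0:ℝ) < 1 - γ/2 := by linarith
    positivity
  have hsq2 : (0:ℝ) < Real.sqrt 2 := Real.sqrt_pos.2 (by norm_num)
  have hcd : (0:ℝ) < c₂ ^ (d-1) := Real.rpow_pos_of_pos hc₂ _
  refine ⟨(4 * Real.sqrt 2 * c₂ ^ (d-1))⁻¹, by positivity, ?_⟩
  intro x r hr1 hrW
  rw [rho_root hγ0 ho x] at hrW ⊢
  set a := x.1 with hadef
  have hWa1 : (1:ℝ) ≤ WW (gammaSphere γ) a := le_trans hr1 hrW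
  have ha1 : 1 ≤ a := by
    by_contra h
    have h0 : a = 0 := by omega
    rw [h0, WW_zero] at hWa1
    linarith
  have ha1R : (1:ℝ) ≤ (a:ℝ) := by exact_mod_cast ha1
  have hapos : (0:ℝ) < (a:ℝ) + 1 := by linarith
  -- distance power bound
  have hWpow : WW (gammaSphere γ) a ^ (d-1)
      ≤ c₂ ^ (d-1) * (((a:ℝ)+1) ^ (γ/2) * ((a:ℝ)+1) ^ γ) := by
    have h1 : WW (gammaSphere γ) a ≤ c₂ * ((a:ℝ)+1) ^ β := by
      have h2 := WW_le_rpow hγ0 hγ2 a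
      rw [← hc₂def, ← hβdef] at h2
      have h3 : (a:ℝ) ^ β ≤ ((a:ℝ)+1) ^ β :=
        Real.rpow_le_rpow (by positivity) (by linarith) (le_of_lt hβ)
      have h4 : (0:ℝ) < c₂ := hc₂
      nlinarith [h2, h3]
    have h5 : WW (gammaSphere γ) a ^ (d-1) ≤ (c₂ * ((a:ℝ)+1) ^ β) ^ (d-1) :=
      Real.rpow_le_rpow (by linarith) h1 (by linarith)
    have h6 : (c₂ * ((a:ℝ)+1) ^ β) ^ (d-1) = c₂ ^ (d-1) * (((a:ℝ)+1) ^ β) ^ (d-1) :=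
      Real.mul_rpow (le_of_lt hc₂) (by positivity)
    have h7 : (((a:ℝ)+1) ^ β) ^ (d-1) = ((a:ℝ)+1) ^ (γ/2 + γ) := by
      rw [← Real.rpow_mul (by positivity)]
      congr 1
      rw [hβdef, hddef]
      have h2γ : (2:ℝ) - γ ≠ 0 := by
        intro h
        have : γ = 2 := by linarith
        linarith
      field_simp
      ring
    have h8 : ((a:ℝ)+1) ^ (γ/2 + γ) = ((a:ℝ)+1) ^ (γ/2) * ((a:ℝ)+1) ^ γ :=
      Real.rpow_add (by positivity) _ _
    rw [h6, h7, h8] at h5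
    exact h5
  set t₂ : ℝ := r * ((a:ℝ)+1) ^ (γ/2) / Real.sqrt 2 with ht₂def
  have ht₂pos : 0 < t₂ := by
    rw [ht₂def]
    have : (0:ℝ) < ((a:ℝ)+1) ^ (γ/2) := Real.rpow_pos_of_pos hapos _
    positivity
  have hrt₂ : r * ((a:ℝ)+1) ^ (γ/2) = Real.sqrt 2 * t₂ := by
    rw [ht₂def]
    field_simp
  have hsplitW : (4 * Real.sqrt 2 * c₂ ^ (d-1))⁻¹ * (r * WW (gammaSphere γ) a ^ (d-1))
      ≤ (4 * Real.sqrt 2)⁻¹ * (Real.sqrt 2 * t₂ * ((a:ℝ)+1) ^ γ) := by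
    have h1 : r * WW (gammaSphere γ) a ^ (d-1)
        ≤ r * (c₂ ^ (d-1) * (((a:ℝ)+1) ^ (γ/2) * ((a:ℝ)+1) ^ γ)) :=
      mul_le_mul_of_nonneg_left hWpow (by linarith)
    have h2 : r * (c₂ ^ (d-1) * (((a:ℝ)+1) ^ (γ/2) * ((a:ℝ)+1) ^ γ))
        = c₂ ^ (d-1) * ((r * ((a:ℝ)+1) ^ (γ/2)) * ((a:ℝ)+1) ^ γ) := by ring
    rw [h2, hrt₂] at h1
    have h3 : (0:ℝ) < 4 * Real.sqrt 2 * c₂ ^ (d-1) := by positivity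
    rw [inv_mul_le_iff₀ h3]
    calc r * WW (gammaSphere γ) a ^ (d-1)
        ≤ c₂ ^ (d-1) * (Real.sqrt 2 * t₂ * ((a:ℝ)+1) ^ γ) := h1
      _ = 4 * Real.sqrt 2 * c₂ ^ (d-1) * ((4 * Real.sqrt 2)⁻¹ * (Real.sqrt 2 * t₂ * ((a:ℝ)+1) ^ γ)) := by
          field_simp
  have hfin := ball_finite hγ0 hγ2 x r
  -- the (a+1)-sphere bound
  have hs_ge : ((a:ℝ)+1) ^ γ ≤ 2 * (gammaSphere γ (a+1) : ℝ) := by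
    have h1 := s_ge hγ0 (a+1)
    rw [cast_succ] at h1
    have h2 : ((a:ℝ)+1) ^ γ ≤ ((a:ℝ)+2) ^ γ :=
      Real.rpow_le_rpow (by positivity) (by linarith) hγ0
    linarith
  rcases lt_or_ge t₂ 1 with hcase | hcase
  · -- small case : one full upper sphere suffices
    have hmem : ∀ y : AntiTree (gammaSphere γ), y.1 ∈ ({a+1} : Finset ℕ) →
        y ∈ AntiTree.ball (gammaSphere γ) x r := by
      intro y hy
      rw [Finset.mem_singleton] at hy
      have hne : x.1 ≠ y.1 := by omega
      show AntiTree.rho (gammaSphere γ) x y ≤ r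
      rw [rho_eq_of_ne hs1 hsm hne, hy]
      have h1 : WW (gammaSphere γ) (a+1) - WW (gammaSphere γ) a = ww (gammaSphere γ) a := by
        rw [WW_succ]
        ring
      rw [abs_of_nonneg (by rw [h1]; exact ww_nonneg a), h1]
      exact le_trans (ww_le_one hγ0 a) hr1
    have hcount := le_ncard_of_levels_subset hfin hmem
    have hcount' : (gammaSphere γ (a+1) : ℝ)
        ≤ ((AntiTree.ball (gammaSphere γ) x r).ncard : ℝ) := by
      have h0 : ∑ b ∈ ({a+1} : Finset ℕ), gammaSphere γ b = gammaSphere γ (a+1) :=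
        Finset.sum_singleton _ _
      rw [h0] at hcount
      exact_mod_cast hcount
    have hkey : (4 * Real.sqrt 2)⁻¹ * (Real.sqrt 2 * t₂ * ((a:ℝ)+1) ^ γ)
        ≤ (gammaSphere γ (a+1) : ℝ) := by
      have h1 : Real.sqrt 2 * t₂ * ((a:ℝ)+1) ^ γ
          ≤ Real.sqrt 2 * (2 * (gammaSphere γ (a+1) : ℝ)) := by
        have h2 : t₂ * ((a:ℝ)+1) ^ γ ≤ 2 * (gammaSphere γ (a+1) : ℝ) := by
          have h3 : (0:ℝ) ≤ ((a:ℝ)+1) ^ γ := by positivity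
          calc t₂ * ((a:ℝ)+1) ^ γ ≤ 1 * ((a:ℝ)+1) ^ γ :=
                mul_le_mul_of_nonneg_right (le_of_lt hcase) h3
            _ = ((a:ℝ)+1) ^ γ := by ring
            _ ≤ 2 * (gammaSphere γ (a+1) : ℝ) := hs_ge
        calc Real.sqrt 2 * t₂ * ((a:ℝ)+1) ^ γ = Real.sqrt 2 * (t₂ * ((a:ℝ)+1) ^ γ) := by ring
          _ ≤ Real.sqrt 2 * (2 * (gammaSphere γ (a+1) : ℝ)) :=
              mul_le_mul_of_nonneg_left h2 (le_of_lt hsq2)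
      have h4 : (4 * Real.sqrt 2)⁻¹ * (Real.sqrt 2 * (2 * (gammaSphere γ (a+1) : ℝ)))
          = (gammaSphere γ (a+1) : ℝ) / 2 := by
        field_simp
        ring
      have h5 : (0:ℝ) < (4 * Real.sqrt 2)⁻¹ := by positivity
      have h6 : (0:ℝ) ≤ (gammaSphere γ (a+1) : ℝ) := by positivity
      calc (4 * Real.sqrt 2)⁻¹ * (Real.sqrt 2 * t₂ * ((a:ℝ)+1) ^ γ)
          ≤ (4 * Real.sqrt 2)⁻¹ * (Real.sqrt 2 * (2 * (gammaSphere γ (a+1) : ℝ))) :=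
            mul_le_mul_of_nonneg_left h1 (le_of_lt h5)
        _ = (gammaSphere γ (a+1) : ℝ) / 2 := h4
        _ ≤ (gammaSphere γ (a+1) : ℝ) := by linarith
    linarith [hsplitW, hkey, hcount']
  · -- main case : a slab of spheres
    set j := ⌊t₂⌋₊ with hjdef
    have hj1 : 1 ≤ j := Nat.le_floor (by rw [Nat.cast_one]; exact hcase)
    have hjt : (j:ℝ) ≤ t₂ := Nat.floor_le (le_of_lt ht₂pos)
    have hjhalf : t₂ / 2 ≤ (j:ℝ) := by
      have h1 := Nat.lt_floor_add_one t₂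
      have h2 : (1:ℝ) ≤ (j:ℝ) := by exact_mod_cast hj1
      rw [← hjdef] at h1
      linarith
    have hmem : ∀ y : AntiTree (gammaSphere γ), y.1 ∈ Finset.Icc (a+1) (a+j) →
        y ∈ AntiTree.ball (gammaSphere γ) x r := by
      intro y hy
      rw [Finset.mem_Icc] at hy
      have hne : x.1 ≠ y.1 := by omega
      show AntiTree.rho (gammaSphere γ) x y ≤ r
      rw [rho_eq_of_ne hs1 hsm hne]
      have hab : a ≤ y.1 := by omega
      rw [abs_of_nonneg (by linarith [WW_mono (s := gammaSphere γ) hab])]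
      have h1 := WW_diff_le hγ0 hab
      have h2 : ((y.1 - a : ℕ):ℝ) ≤ (j:ℝ) := by
        have : y.1 - a ≤ j := by omega
        exact_mod_cast this
      have h3 : (0:ℝ) ≤ ((a:ℝ)+1) ^ (-(γ/2)) := by positivity
      have h4 : WW (gammaSphere γ) y.1 - WW (gammaSphere γ) a
          ≤ Real.sqrt 2 * (j:ℝ) * ((a:ℝ)+1) ^ (-(γ/2)) := by
        have h5 : Real.sqrt 2 * ((y.1 - a : ℕ):ℝ) * ((a:ℝ)+1) ^ (-(γ/2))
            ≤ Real.sqrt 2 * (j:ℝ) * ((a:ℝ)+1) ^ (-(γ/2)) := by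
          apply mul_le_mul_of_nonneg_right _ h3
          exact mul_le_mul_of_nonneg_left h2 (le_of_lt hsq2)
        exact le_trans h1 h5
      have h6 : Real.sqrt 2 * (j:ℝ) * ((a:ℝ)+1) ^ (-(γ/2)) ≤ r := by
        have h7 : Real.sqrt 2 * (j:ℝ) ≤ Real.sqrt 2 * t₂ :=
          mul_le_mul_of_nonneg_left hjt (le_of_lt hsq2)
        have h8 : Real.sqrt 2 * t₂ * ((a:ℝ)+1) ^ (-(γ/2)) = r := by
          rw [← hrt₂]
          have h9 : ((a:ℝ)+1) ^ (γ/2) * ((a:ℝ)+1) ^ (-(γ/2)) = 1 := by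
            rw [← Real.rpow_add hapos]
            norm_num
          calc r * ((a:ℝ)+1) ^ (γ/2) * ((a:ℝ)+1) ^ (-(γ/2))
              = r * (((a:ℝ)+1) ^ (γ/2) * ((a:ℝ)+1) ^ (-(γ/2))) := by ring
            _ = r * 1 := by rw [h9]
            _ = r := by ring
        calc Real.sqrt 2 * (j:ℝ) * ((a:ℝ)+1) ^ (-(γ/2))
            ≤ Real.sqrt 2 * t₂ * ((a:ℝ)+1) ^ (-(γ/2)) :=
              mul_le_mul_of_nonneg_right h7 h3
          _ = r := h8
      linarith
    have hcount := le_ncard_of_levels_subset hfin hmem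
    have hterm : ∀ b ∈ Finset.Icc (a+1) (a+j),
        ((a:ℝ)+1) ^ γ / 2 ≤ (gammaSphere γ b : ℝ) := by
      intro b hb
      rw [Finset.mem_Icc] at hb
      have h1 : ((a:ℝ)+1) ^ γ ≤ ((b:ℝ)+1) ^ γ := by
        apply Real.rpow_le_rpow (by positivity) _ hγ0
        have : (a:ℝ) ≤ (b:ℝ) := by exact_mod_cast le_trans (Nat.le_succ a) hb.1
        linarith
      have h2 := s_ge hγ0 b
      linarith
    have hsumlow : (j:ℝ) * (((a:ℝ)+1) ^ γ / 2)
        ≤ ∑ b ∈ Finset.Icc (a+1) (a+j), (gammaSphere γ b : ℝ) := by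
      have hcardIcc : (Finset.Icc (a+1) (a+j)).card = j := by
        rw [Nat.card_Icc]
        omega
      have := Finset.card_nsmul_le_sum (Finset.Icc (a+1) (a+j))
        (fun b => (gammaSphere γ b : ℝ)) (((a:ℝ)+1) ^ γ / 2) hterm
      rw [hcardIcc, nsmul_eq_mul] at this
      exact this
    have hcount' : (j:ℝ) * (((a:ℝ)+1) ^ γ / 2)
        ≤ ((AntiTree.ball (gammaSphere γ) x r).ncard : ℝ) := by
      have h0 : (∑ b ∈ Finset.Icc (a+1) (a+j), gammaSphere γ b : ℕ) ≤
          (AntiTree.ball (gammaSphere γ) x r).ncard := hcount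
      have h1 : ((∑ b ∈ Finset.Icc (a+1) (a+j), gammaSphere γ b : ℕ):ℝ)
          ≤ ((AntiTree.ball (gammaSphere γ) x r).ncard : ℝ) := by exact_mod_cast h0
      have h2 : ((∑ b ∈ Finset.Icc (a+1) (a+j), gammaSphere γ b : ℕ):ℝ)
          = ∑ b ∈ Finset.Icc (a+1) (a+j), (gammaSphere γ b : ℝ) := by push_cast; rfl
      rw [h2] at h1
      linarith [hsumlow]
    have hkey : (4 * Real.sqrt 2)⁻¹ * (Real.sqrt 2 * t₂ * ((a:ℝ)+1) ^ γ)
        ≤ (j:ℝ) * (((a:ℝ)+1) ^ γ / 2) := by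
      have h1 : (0:ℝ) ≤ ((a:ℝ)+1) ^ γ := by positivity
      have h2 : (4 * Real.sqrt 2)⁻¹ * (Real.sqrt 2 * t₂ * ((a:ℝ)+1) ^ γ)
          = (t₂/2) * (((a:ℝ)+1) ^ γ / 2) := by
        have hsqne : Real.sqrt 2 ≠ 0 := ne_of_gt hsq2
        field_simp
        ring
      rw [h2]
      apply mul_le_mul_of_nonneg_right hjhalf (by positivity)
    linarith [hsplitW, hkey, hcount']

end Gamma
end GammaAux

/-- **Polynomial volume growth of anti-trees.**
For `γ ∈ [0,2)`, `d := 2(γ+1)/(2-γ)`, and the `γ`-anti-tree with root `o`, counting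
measure `m ≡ 1` and intrinsic degree path metric `ρ`, there is `C ≥ 1` such that for all
vertices `x` (with `r_x := ρ(x,o)`):
(i) `C⁻¹ r^d ≤ #B_x(r) ≤ C r^d` for all `r ≥ max(1, r_x)`, and
(ii) `C⁻¹ r r_x^{d-1} ≤ #B_x(r) ≤ C r r_x^{d-1}` for all `1 ≤ r ≤ r_x`. -/
theorem gammaAntiTree_volume (γ : ℝ) (hγ0 : 0 ≤ γ) (hγ2 : γ < 2)
    (o : AntiTree (gammaSphere γ)) (ho : o.1 = 0) :
    ∃ C : ℝ, 1 ≤ C ∧ ∀ x : AntiTree (gammaSphere γ),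
      (∀ r : ℝ, max 1 (AntiTree.rho (gammaSphere γ) x o) ≤ r →
        C⁻¹ * r ^ (2 * (γ + 1) / (2 - γ)) ≤ ((AntiTree.ball (gammaSphere γ) x r).ncard : ℝ) ∧
        ((AntiTree.ball (gammaSphere γ) x r).ncard : ℝ) ≤ C * r ^ (2 * (γ + 1) / (2 - γ))) ∧
      (∀ r : ℝ, 1 ≤ r → r ≤ AntiTree.rho (gammaSphere γ) x o →
        C⁻¹ * (r * AntiTree.rho (gammaSphere γ) x o ^ (2 * (γ + 1) / (2 - γ) - 1)) ≤
            ((AntiTree.ball (gammaSphere γ) x r).ncard : ℝ) ∧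
        ((AntiTree.ball (gammaSphere γ) x r).ncard : ℝ) ≤
            C * (r * AntiTree.rho (gammaSphere γ) x o ^ (2 * (γ + 1) / (2 - γ) - 1))) := by
  obtain ⟨C1, hC1, H1⟩ := GammaAux.upper_i hγ0 hγ2 ho
  obtain ⟨c2, hc2, H2⟩ := GammaAux.lower_i hγ0 hγ2 ho
  obtain ⟨C3, hC3, H3⟩ := GammaAux.upper_ii hγ0 hγ2 ho
  obtain ⟨c4, hc4, H4⟩ := GammaAux.lower_ii hγ0 hγ2 ho
  set C : ℝ := max 1 (max (max C1 C3) (max c2⁻¹ c4⁻¹)) with hCdef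
  have hC1' : 1 ≤ C := le_max_left _ _
  have hC0 : 0 < C := by linarith
  have hCC1 : C1 ≤ C := le_trans (le_trans (le_max_left _ _) (le_max_left _ _)) (le_max_right _ _)
  have hCC3 : C3 ≤ C := le_trans (le_trans (le_max_right _ _) (le_max_left _ _)) (le_max_right _ _)
  have hCc2 : c2⁻¹ ≤ C := le_trans (le_trans (le_max_left _ _) (le_max_right _ _)) (le_max_right _ _)
  have hCc4 : c4⁻¹ ≤ C := le_trans (le_trans (le_max_right _ _) (le_max_right _ _)) (le_max_right _ _)
  have hinv2 : C⁻¹ ≤ c2 := by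
    have h := inv_anti₀ (inv_pos.2 hc2) hCc2
    rwa [inv_inv] at h
  have hinv4 : C⁻¹ ≤ c4 := by
    have h := inv_anti₀ (inv_pos.2 hc4) hCc4
    rwa [inv_inv] at h
  refine ⟨C, hC1', ?_⟩
  intro x
  constructor
  · intro r hr
    have hr1 : (1:ℝ) ≤ r := le_trans (le_max_left _ _) hr
    have hrd : (0:ℝ) ≤ r ^ (2 * (γ + 1) / (2 - γ)) := Real.rpow_nonneg (by linarith) _
    constructor
    · calc C⁻¹ * r ^ (2 * (γ + 1) / (2 - γ)) ≤ c2 * r ^ (2 * (γ + 1) / (2 - γ)) :=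
          mul_le_mul_of_nonneg_right hinv2 hrd
        _ ≤ _ := H2 x r hr
    · calc ((AntiTree.ball (gammaSphere γ) x r).ncard : ℝ)
          ≤ C1 * r ^ (2 * (γ + 1) / (2 - γ)) := H1 x r hr
        _ ≤ C * r ^ (2 * (γ + 1) / (2 - γ)) := mul_le_mul_of_nonneg_right hCC1 hrd
  · intro r hr1 hr2
    have hρ : (0:ℝ) ≤ AntiTree.rho (gammaSphere γ) x o := by linarith
    have hq : (0:ℝ) ≤ r * AntiTree.rho (gammaSphere γ) x o ^ (2 * (γ + 1) / (2 - γ) - 1) := by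
      have := Real.rpow_nonneg hρ (2 * (γ + 1) / (2 - γ) - 1)
      nlinarith
    constructor
    · calc C⁻¹ * (r * AntiTree.rho (gammaSphere γ) x o ^ (2 * (γ + 1) / (2 - γ) - 1))
          ≤ c4 * (r * AntiTree.rho (gammaSphere γ) x o ^ (2 * (γ + 1) / (2 - γ) - 1)) :=
            mul_le_mul_of_nonneg_right hinv4 hq
        _ ≤ _ := H4 x r hr1 hr2
    · calc ((AntiTree.ball (gammaSphere γ) x r).ncard : ℝ)
          ≤ C3 * (r * AntiTree.rho (gammaSphere γ) x o ^ (2 * (γ + 1) / (2 - γ) - 1)) :=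
            H3 x r hr1 hr2
        _ ≤ C * (r * AntiTree.rho (gammaSphere γ) x o ^ (2 * (γ + 1) / (2 - γ) - 1)) :=
            mul_le_mul_of_nonneg_right hCC3 hq
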